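/- arXiv:1605.06250 — 3 statements merged into one kernel-verified Lean document; each statement's English description precedes it below -/
import Mathlib

section
/- Let ρ > 1, μ ∈ (0,1], let I be an open interval containing [p₁,p₂], and p₀ ∈ I. Suppose ψ ∈ C¹(I) ∩ C²(I∖{p₀}) with ψ'(p) = |p−p₀|^{ρ−1} ψ̃(p) for all p ∈ I, where |ψ̃| is continuous and nonvanishing on I, and ψ' is monotone on {p ∈ I : p < p₀} and on {p ∈ I : p > p₀}. Suppose U : (p₁,p₂] → ℂ satisfies U(p) = (p−p₁)^{μ−1} ũ(p) with ũ continuous on [p₁,p₂], differentiable on (p₁,p₂), ũ' ∈ L¹(p₁,p₂), and ũ(p₁) ≠ 0 if μ ≠ 1. Then for all ω > 0, |∫_{p₁}^{p₂} U(p) e^{iωψ(p)} dp| ≤ C(U,ψ) ω^{−μ/ρ}, where C(U,ψ) = (3/μ)‖ũ‖_{L^∞(p₁,p₂)} + (8‖ũ‖_{L^∞(p₁,p₂)} + 2‖ũ'‖_{L¹(p₁,p₂)}) (min_{[p₁,p₂]}|ψ̃|)^{−1}. -/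
open MeasureTheory intervalIntegral

open Set Topology Filter

/-- If `g` is monotone on an open set `S` and differentiable at `x ∈ S`, the derivative is
nonnegative. -/
lemma mono_deriv_nonneg_aux {g : ℝ → ℝ} {S : Set ℝ} (hS : IsOpen S) (hg : MonotoneOn g S)
    {x g' : ℝ} (hx : x ∈ S) (hd : HasDerivAt g g' x) : 0 ≤ g' := by
  have h1 : Filter.Tendsto (slope g x) (𝓝[>] x) (𝓝 g') :=
    (hasDerivAt_iff_tendsto_slope.mp hd).mono_left
      (nhdsWithin_mono x fun y hy => (Set.mem_compl_singleton_iff).2 (ne_of_gt hy))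
  refine ge_of_tendsto h1 ?_
  have hmem : S ∩ Set.Ioi x ∈ 𝓝[>] x :=
    Filter.inter_mem (mem_nhdsWithin_of_mem_nhds (hS.mem_nhds hx)) self_mem_nhdsWithin
  filter_upwards [hmem] with y hy
  have : g x ≤ g y := hg hx hy.1 (le_of_lt hy.2)
  have hxy : 0 < y - x := sub_pos.2 hy.2
  rw [slope_def_field]
  exact div_nonneg (by linarith) hxy.le

lemma vdc_kernel (ψ : ℝ → ℝ) (ω lam c x : ℝ) (hω : 0 < ω) (hlam : 0 < lam) (hcx : c ≤ x)
    (hψd : ∀ p ∈ Set.Icc c x, HasDerivAt ψ (deriv ψ p) p)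
    (hψ'd : ∀ p ∈ Set.Icc c x, HasDerivAt (deriv ψ) (deriv (deriv ψ) p) p)
    (hψ''c : ContinuousOn (deriv (deriv ψ)) (Set.Icc c x))
    (hsign : (∀ p ∈ Set.Icc c x, lam ≤ deriv ψ p) ∨ (∀ p ∈ Set.Icc c x, deriv ψ p ≤ -lam))
    (hccl : (∀ p ∈ Set.Icc c x, 0 ≤ deriv (deriv ψ) p) ∨
      (∀ p ∈ Set.Icc c x, deriv (deriv ψ) p ≤ 0)) :
    ‖∫ p in c..x, Complex.exp (Complex.I * ω * ψ p)‖ ≤ 2 / (ω * lam) := by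
  set E : ℝ → ℂ := fun p => Complex.exp (Complex.I * ω * ψ p) with hE
  have hψne : ∀ p ∈ Set.Icc c x, deriv ψ p ≠ 0 := by
    intro p hp
    rcases hsign with h | h
    · exact ne_of_gt (lt_of_lt_of_le hlam (h p hp))
    · exact ne_of_lt (lt_of_le_of_lt (h p hp) (by linarith))
  set h : ℝ → ℝ := fun p => (deriv ψ p)⁻¹ with hh
  set hd : ℝ → ℝ := fun p => -(deriv (deriv ψ) p) / (deriv ψ p) ^ 2 with hhd
  have hhderiv : ∀ p ∈ Set.Icc c x, HasDerivAt h (hd p) p := fun p hp =>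
    (hψ'd p hp).inv (hψne p hp)
  have hEnorm : ∀ p, ‖E p‖ = 1 := by
    intro p
    simp [hE, Complex.norm_exp]
  have hEc : ∀ p ∈ Set.Icc c x, HasDerivAt E (Complex.I * ω * deriv ψ p * E p) p := by
    intro p hp
    have : HasDerivAt (fun q => Complex.I * ω * ψ q) (Complex.I * ω * deriv ψ p) p :=
      ((hψd p hp).ofReal_comp).const_mul (Complex.I * ω)
    have := this.cexp
    convert this using 1
    ring
  -- G = h * E / (I ω)
  set G : ℝ → ℂ := fun p => (h p : ℂ) * E p / (Complex.I * ω) with hG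
  have hIω : (Complex.I * ω) ≠ 0 := by
    simp [Complex.ext_iff, hω.ne']
  have hGd : ∀ p ∈ Set.Icc c x, HasDerivAt G (E p + (hd p : ℂ) * E p / (Complex.I * ω)) p := by
    intro p hp
    have h1 : HasDerivAt (fun q => ((h q : ℝ) : ℂ)) (hd p : ℂ) p := (hhderiv p hp).ofReal_comp
    have h2 := (h1.mul (hEc p hp)).div_const (Complex.I * ω)
    have key : ((h p : ℝ) : ℂ) * ((deriv ψ p : ℝ) : ℂ) = 1 := by
      simp only [hh]
      push_cast
      exact inv_mul_cancel₀ (by exact_mod_cast hψne p hp)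
    have e2 : ((h p : ℝ):ℂ) * (Complex.I * ↑ω * ↑(deriv ψ p) * E p) = Complex.I * ↑ω * E p := by
      linear_combination (Complex.I * (ω:ℂ) * E p) * key
    have e1 : (↑(hd p) * E p + ↑(h p) * (Complex.I * ↑ω * ↑(deriv ψ p) * E p)) / (Complex.I * ↑ω)
        = E p + (hd p : ℂ) * E p / (Complex.I * ↑ω) := by
      rw [e2, add_div, mul_div_assoc, mul_div_cancel_left₀ _ hIω, add_comm]
    rw [← e1]
    exact h2
  -- continuity facts
  have huIcc : Set.uIcc c x = Set.Icc c x := Set.uIcc_of_le hcx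
  have hψ'cont : ContinuousOn (deriv ψ) (Set.Icc c x) := fun p hp =>
    (hψ'd p hp).continuousAt.continuousWithinAt
  have hEcont : ContinuousOn E (Set.Icc c x) := fun p hp =>
    (hEc p hp).continuousAt.continuousWithinAt
  have hhdcont : ContinuousOn hd (Set.Icc c x) := by
    apply ContinuousOn.div (hψ''c.neg) (hψ'cont.pow 2)
    intro p hp
    exact pow_ne_zero 2 (hψne p hp)
  have hhdEcont : ContinuousOn (fun p => (hd p : ℂ) * E p / (Complex.I * ω)) (Set.Icc c x) :=
    ((Complex.continuous_ofReal.comp_continuousOn hhdcont).mul hEcont).div_const _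
  have hint : IntervalIntegrable (fun p => E p + (hd p : ℂ) * E p / (Complex.I * ω))
      volume c x := by
    apply ContinuousOn.intervalIntegrable
    rw [huIcc]
    exact hEcont.add hhdEcont
  have hEint : IntervalIntegrable E volume c x := by
    apply ContinuousOn.intervalIntegrable; rw [huIcc]; exact hEcont
  have hhdEint : IntervalIntegrable (fun p => (hd p : ℂ) * E p / (Complex.I * ω)) volume c x := by
    apply ContinuousOn.intervalIntegrable; rw [huIcc]; exact hhdEcont
  have ftc : (∫ p in c..x, (E p + (hd p : ℂ) * E p / (Complex.I * ω))) = G x - G c := by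
    apply intervalIntegral.integral_eq_sub_of_hasDerivAt
    · intro p hp; rw [huIcc] at hp; exact hGd p hp
    · exact hint
  have hsplit : (∫ p in c..x, E p) = G x - G c
      - ∫ p in c..x, (hd p : ℂ) * E p / (Complex.I * ω) := by
    rw [← ftc, intervalIntegral.integral_add hEint hhdEint]
    ring
  -- FTC for hd : ∫ hd = h x - h c
  have hhdint : IntervalIntegrable hd volume c x := by
    apply ContinuousOn.intervalIntegrable; rw [huIcc]; exact hhdcont
  have ftc2 : (∫ p in c..x, hd p) = h x - h c := by
    apply intervalIntegral.integral_eq_sub_of_hasDerivAt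
    · intro p hp; rw [huIcc] at hp; exact hhderiv p hp
    · exact hhdint
  -- sign of hd on the interval
  have habs : (∫ p in c..x, |hd p|) = |h x - h c| := by
    rcases hccl with hpos | hneg
    · have : ∀ p ∈ Set.Icc c x, |hd p| = -hd p := by
        intro p hp
        have h2 : hd p ≤ 0 := by
          rw [hhd]
          apply div_nonpos_of_nonpos_of_nonneg (by simpa using hpos p hp) (sq_nonneg _)
        rw [abs_of_nonpos h2]
      rw [intervalIntegral.integral_congr (g := fun p => -hd p) (by rw [huIcc]; exact this),
        intervalIntegral.integral_neg, ftc2]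
      rw [abs_of_nonpos (by
        show h x - h c ≤ 0
        rw [← ftc2]
        have h0 : 0 ≤ ∫ p in c..x, -hd p :=
          integral_nonneg hcx (fun u hu => by
            rw [hhd]; simp only [neg_div, neg_neg]
            exact div_nonneg (hpos u hu) (sq_nonneg _))
        rw [intervalIntegral.integral_neg] at h0
        linarith)]
    · have : ∀ p ∈ Set.Icc c x, |hd p| = hd p := by
        intro p hp
        have h2 : 0 ≤ hd p := by
          rw [hhd]
          apply div_nonneg (by simpa using hneg p hp) (sq_nonneg _)
        rw [abs_of_nonneg h2]
      rw [intervalIntegral.integral_congr (g := hd) (by rw [huIcc]; exact this), ftc2]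
      rw [abs_of_nonneg (by
        show (0:ℝ) ≤ h x - h c
        rw [← ftc2]
        apply integral_nonneg hcx
        intro p hp
        rw [hhd]
        exact div_nonneg (by simpa using hneg p ⟨hp.1, hp.2⟩) (sq_nonneg _))]
  have hnormG : ∀ p, ‖G p‖ = |h p| / ω := by
    intro p
    rw [hG]
    simp only [norm_div, norm_mul, Complex.norm_real, Real.norm_eq_abs, hEnorm p, mul_one,
      map_mul, Complex.norm_I, one_mul,
      abs_of_pos hω]
  set W : ℂ := ∫ p in c..x, (hd p : ℂ) * E p / (Complex.I * ω) with hW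
  have t2 : ‖W‖ ≤ |h x - h c| / ω := by
    have t := intervalIntegral.norm_integral_le_integral_norm
      (f := fun p => (hd p : ℂ) * E p / (Complex.I * ω)) (μ := volume) hcx
    have e : (∫ p in c..x, ‖(hd p : ℂ) * E p / (Complex.I * ω)‖)
        = (∫ p in c..x, |hd p|) / ω := by
      rw [← intervalIntegral.integral_div]
      apply intervalIntegral.integral_congr
      intro p hp
      simp only [norm_div, norm_mul, Complex.norm_real, Real.norm_eq_abs, hEnorm p, mul_one,
        map_mul, Complex.norm_I, one_mul,
        abs_of_pos hω]
    rw [e, habs] at t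
    exact t
  have hbound : ‖∫ p in c..x, E p‖ ≤ (|h x| + |h c| + |h x - h c|) / ω := by
    rw [hsplit]
    calc ‖G x - G c - W‖ ≤ ‖G x - G c‖ + ‖W‖ := norm_sub_le _ _
      _ ≤ ‖G x‖ + ‖G c‖ + ‖W‖ := by linarith [norm_sub_le (G x) (G c)]
      _ ≤ |h x| / ω + |h c| / ω + |h x - h c| / ω := by
          rw [hnormG x, hnormG c]
          linarith [t2]
      _ = (|h x| + |h c| + |h x - h c|) / ω := by ring
  refine hbound.trans ?_
  have key : |h x| + |h c| + |h x - h c| ≤ 2 / lam := by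
    rcases hsign with hs | hs
    · have hx1 : 0 < deriv ψ x := lt_of_lt_of_le hlam (hs x ⟨hcx, le_refl x⟩)
      have hc1 : 0 < deriv ψ c := lt_of_lt_of_le hlam (hs c ⟨le_refl c, hcx⟩)
      have hx2 : h x ≤ 1 / lam := by
        rw [hh]
        simp only [one_div]
        exact inv_anti₀ hlam (hs x ⟨hcx, le_refl x⟩)
      have hc2 : h c ≤ 1 / lam := by
        rw [hh]
        simp only [one_div]
        exact inv_anti₀ hlam (hs c ⟨le_refl c, hcx⟩)
      have hx3 : 0 < h x := by rw [hh]; exact inv_pos.2 hx1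
      have hc3 : 0 < h c := by rw [hh]; exact inv_pos.2 hc1
      rw [abs_of_pos hx3, abs_of_pos hc3]
      rcases le_total (h x) (h c) with hle | hle
      · rw [abs_of_nonpos (by linarith)]
        have : (2:ℝ) / lam = 2 * (1 / lam) := by ring
        linarith
      · rw [abs_of_nonneg (by linarith)]
        have : (2:ℝ) / lam = 2 * (1 / lam) := by ring
        linarith
    · have hx1 : deriv ψ x < 0 := lt_of_le_of_lt (hs x ⟨hcx, le_refl x⟩) (by linarith)
      have hc1 : deriv ψ c < 0 := lt_of_le_of_lt (hs c ⟨le_refl c, hcx⟩) (by linarith)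
      have hx2 : -(1 / lam) ≤ h x := by
        rw [hh]
        have := inv_anti₀ hlam (by linarith [hs x ⟨hcx, le_refl x⟩] : lam ≤ -(deriv ψ x))
        rw [inv_neg] at this
        simp only [one_div]
        linarith
      have hc2 : -(1 / lam) ≤ h c := by
        rw [hh]
        have := inv_anti₀ hlam (by linarith [hs c ⟨le_refl c, hcx⟩] : lam ≤ -(deriv ψ c))
        rw [inv_neg] at this
        simp only [one_div]
        linarith
      have hx3 : h x < 0 := by rw [hh]; exact inv_lt_zero.2 hx1
      have hc3 : h c < 0 := by rw [hh]; exact inv_lt_zero.2 hc1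
      rw [abs_of_neg hx3, abs_of_neg hc3]
      rcases le_total (h x) (h c) with hle | hle
      · rw [abs_of_nonpos (by linarith)]
        have : (2:ℝ) / lam = 2 * (1 / lam) := by ring
        linarith
      · rw [abs_of_nonneg (by linarith)]
        have : (2:ℝ) / lam = 2 * (1 / lam) := by ring
        linarith
  calc (|h x| + |h c| + |h x - h c|) / ω ≤ (2 / lam) / ω := by gcongr
    _ = 2 / (ω * lam) := by rw [div_div, mul_comm lam ω]

lemma abel_bound (V E : ℝ → ℂ) (c d B : ℝ) (hcd : c ≤ d)
    (hEc : ContinuousOn E (Set.Icc c d))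
    (hF : ∀ x ∈ Set.Icc c d, ‖∫ p in c..x, E p‖ ≤ B)
    (hVc : ContinuousOn V (Set.Icc c d))
    (hVd : ∀ p ∈ Set.Ioo c d, HasDerivAt V (deriv V p) p)
    (hV'int : IntervalIntegrable (deriv V) volume c d) :
    ‖∫ p in c..d, V p * E p‖ ≤ B * (‖V d‖ + ∫ p in c..d, ‖deriv V p‖) := by
  have huIcc : Set.uIcc c d = Set.Icc c d := Set.uIcc_of_le hcd
  set F : ℝ → ℂ := fun x => ∫ p in c..x, E p with hFdef
  have hEint : ∀ x ∈ Set.Icc c d, IntervalIntegrable E volume c x := by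
    intro x hx
    apply ContinuousOn.intervalIntegrable
    apply hEc.mono
    rw [Set.uIcc_of_le hx.1]
    exact Set.Icc_subset_Icc le_rfl hx.2
  have hFc : ContinuousOn F (Set.Icc c d) := by
    rw [← huIcc]
    exact intervalIntegral.continuousOn_primitive_interval'
      (ContinuousOn.intervalIntegrable (by rw [huIcc]; exact hEc))
      (by rw [huIcc]; exact Set.left_mem_Icc.2 hcd)
  have hFd : ∀ x ∈ Set.Ioo c d, HasDerivAt F (E x) x := by
    intro x hx
    have hx' : Set.Icc c d ∈ 𝓝 x := Icc_mem_nhds hx.1 hx.2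
    have hcont : ContinuousAt E x := hEc.continuousAt hx'
    have hmeasAt : StronglyMeasurableAtFilter E (𝓝 x) volume :=
      ContinuousAt.stronglyMeasurableAtFilter isOpen_Ioo
        (fun y hy => hEc.continuousAt (Icc_mem_nhds hy.1 hy.2)) x hx
    exact intervalIntegral.integral_hasDerivAt_right (hEint x ⟨hx.1.le, hx.2.le⟩) hmeasAt hcont
  -- product
  have hPc : ContinuousOn (fun x => V x * F x) (Set.Icc c d) := hVc.mul hFc
  have hPd : ∀ x ∈ Set.Ioo c d,
      HasDerivAt (fun p => V p * F p) (deriv V x * F x + V x * E x) x := by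
    intro x hx
    exact (hVd x hx).mul (hFd x hx)
  have hint : IntervalIntegrable (fun x => deriv V x * F x + V x * E x) volume c d := by
    apply IntervalIntegrable.add
    · exact hV'int.mul_continuousOn (by rw [huIcc]; exact hFc)
    · exact ContinuousOn.intervalIntegrable (by rw [huIcc]; exact hVc.mul hEc)
  have ftc := intervalIntegral.integral_eq_sub_of_hasDeriv_right_of_le hcd hPc
    (fun x hx => (hPd x hx).hasDerivWithinAt) hint
  have hFc0 : F c = 0 := intervalIntegral.integral_same
  have hsplit : (∫ p in c..d, V p * E p) = V d * F d - ∫ p in c..d, deriv V p * F p := by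
    have hadd := intervalIntegral.integral_add
      (hV'int.mul_continuousOn (by rw [huIcc]; exact hFc))
      (ContinuousOn.intervalIntegrable (u := fun x => V x * E x) (by rw [huIcc]; exact hVc.mul hEc))
    rw [hadd] at ftc
    rw [hFc0] at ftc
    have : (∫ p in c..d, V p * E p) = (V d * F d - V c * 0) - ∫ p in c..d, deriv V p * F p := by
      rw [← ftc]; ring
    simpa using this
  rw [hsplit]
  have hBnn : 0 ≤ B := le_trans (norm_nonneg _) (hF c (Set.left_mem_Icc.2 hcd))
  have t1 : ‖∫ p in c..d, deriv V p * F p‖ ≤ B * ∫ p in c..d, ‖deriv V p‖ := by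
    have h1 : ‖∫ p in c..d, deriv V p * F p‖ ≤ ∫ p in c..d, ‖deriv V p * F p‖ :=
      intervalIntegral.norm_integral_le_integral_norm hcd
    have h2 : (∫ p in c..d, ‖deriv V p * F p‖) ≤ ∫ p in c..d, ‖deriv V p‖ * B := by
      apply intervalIntegral.integral_mono_on hcd
      · exact (hV'int.mul_continuousOn (by rw [huIcc]; exact hFc)).norm
      · exact hV'int.norm.mul_const B
      · intro x hx
        rw [norm_mul]
        exact mul_le_mul_of_nonneg_left (hF x hx) (norm_nonneg _)
    rw [intervalIntegral.integral_mul_const] at h2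
    calc ‖∫ p in c..d, deriv V p * F p‖ ≤ _ := h1
      _ ≤ (∫ p in c..d, ‖deriv V p‖) * B := h2
      _ = B * ∫ p in c..d, ‖deriv V p‖ := mul_comm _ _
  calc ‖V d * F d - ∫ p in c..d, deriv V p * F p‖
      ≤ ‖V d * F d‖ + ‖∫ p in c..d, deriv V p * F p‖ := norm_sub_le _ _
    _ ≤ ‖V d‖ * B + B * ∫ p in c..d, ‖deriv V p‖ := by
        rw [norm_mul]
        have := mul_le_mul_of_nonneg_left (hF d (Set.right_mem_Icc.2 hcd)) (norm_nonneg (V d))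
        linarith [t1]
    _ = B * (‖V d‖ + ∫ p in c..d, ‖deriv V p‖) := by ring

section osc
variable {ρ μ a b p₁ p₂ p₀ ω δ m M c d : ℝ} {ψ ψt : ℝ → ℝ} {ut : ℝ → ℂ}

lemma const_sign_of_ne {f : ℝ → ℝ} {c d : ℝ} (hcd : c ≤ d)
    (hf : ContinuousOn f (Set.Icc c d)) (hne : ∀ p ∈ Set.Icc c d, f p ≠ 0) :
    (∀ p ∈ Set.Icc c d, 0 < f p) ∨ (∀ p ∈ Set.Icc c d, f p < 0) := by
  rcases (hne c ⟨le_rfl, hcd⟩).lt_or_gt with h | h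
  · right
    intro p hp
    by_contra hnp
    have hp0 : 0 < f p := (hne p hp).lt_or_gt.resolve_left (by simpa using hnp)
    have hsub : Set.Icc c p ⊆ Set.Icc c d := Set.Icc_subset_Icc le_rfl hp.2
    have hiv := intermediate_value_Icc hp.1 (hf.mono hsub)
    have h0 : (0:ℝ) ∈ Set.Icc (f c) (f p) := ⟨h.le, hp0.le⟩
    obtain ⟨z, hz, hz0⟩ := hiv h0
    exact hne z (hsub hz) hz0
  · left
    intro p hp
    by_contra hnp
    have hp0 : f p < 0 := (hne p hp).lt_or_gt.resolve_right (by simpa using hnp)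
    have hsub : Set.Icc c p ⊆ Set.Icc c d := Set.Icc_subset_Icc le_rfl hp.2
    have hiv := intermediate_value_Icc' hp.1 (hf.mono hsub)
    have h0 : (0:ℝ) ∈ Set.Icc (f p) (f c) := ⟨hp0.le, h.le⟩
    obtain ⟨z, hz, hz0⟩ := hiv h0
    exact hne z (hsub hz) hz0


lemma osc_bound (hρ : 1 < ρ) (hμ0 : 0 < μ) (hμ1 : μ ≤ 1) (hω : 0 < ω)
    (hδ : δ = ω ^ (-(1/ρ)))
    (hI : Set.Icc p₁ p₂ ⊆ Set.Ioo a b)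
    (hψ1 : ContDiffOn ℝ 1 ψ (Set.Ioo a b))
    (hψ2 : ContDiffOn ℝ 2 ψ (Set.Ioo a b \ {p₀}))
    (hfact : ∀ p ∈ Set.Ioo a b, deriv ψ p = |p - p₀| ^ (ρ - 1) * ψt p)
    (hmono₁ : MonotoneOn (deriv ψ) {p ∈ Set.Ioo a b | p < p₀} ∨
      AntitoneOn (deriv ψ) {p ∈ Set.Ioo a b | p < p₀})
    (hmono₂ : MonotoneOn (deriv ψ) {p ∈ Set.Ioo a b | p₀ < p} ∨
      AntitoneOn (deriv ψ) {p ∈ Set.Ioo a b | p₀ < p})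
    (hutc : ContinuousOn ut (Set.Icc p₁ p₂))
    (hutd : ∀ p ∈ Set.Ioo p₁ p₂, DifferentiableAt ℝ ut p)
    (hutint : IntervalIntegrable (deriv ut) volume p₁ p₂)
    (hm : ∀ p ∈ Set.Icc p₁ p₂, m ≤ |ψt p|) (hm0 : 0 < m)
    (hM : ∀ p ∈ Set.Icc p₁ p₂, ‖ut p‖ ≤ M)
    (hc : p₁ + δ ≤ c) (hcd : c ≤ d) (hd : d ≤ p₂)
    (hfar : ∀ p ∈ Set.Icc c d, δ ≤ |p - p₀|)
    (hside : (∀ p ∈ Set.Icc c d, p < p₀) ∨ (∀ p ∈ Set.Icc c d, p₀ < p)) :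
    ‖∫ p in c..d, (((p - p₁) ^ (μ - 1) : ℝ) : ℂ) * ut p * Complex.exp (Complex.I * ω * ψ p)‖ ≤
      2 * δ / m * (2 * M * δ ^ (μ - 1) + δ ^ (μ - 1) * ∫ p in c..d, ‖deriv ut p‖) := by
  have hδ0 : 0 < δ := by rw [hδ]; positivity
  have hM0 : 0 ≤ M := le_trans (norm_nonneg _) (hM p₁ ⟨le_rfl, by linarith⟩)
  have hsubIcc : Set.Icc c d ⊆ Set.Icc p₁ p₂ := Set.Icc_subset_Icc (by linarith) hd
  have hsubO : Set.Icc c d ⊆ Set.Ioo a b := subset_trans hsubIcc hI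
  have hO' : IsOpen (Set.Ioo a b \ {p₀}) := isOpen_Ioo.sdiff isClosed_singleton
  have hsubO' : Set.Icc c d ⊆ Set.Ioo a b \ {p₀} := by
    intro p hp
    refine ⟨hsubO hp, ?_⟩
    have := hfar p hp
    simp only [Set.mem_singleton_iff]
    intro h
    rw [h, sub_self, abs_zero] at this
    linarith
  set lam : ℝ := m * δ ^ (ρ - 1) with hlamdef
  have hlam : 0 < lam := by positivity
  -- phase derivative facts on Icc c d
  have hψd : ∀ p ∈ Set.Icc c d, HasDerivAt ψ (deriv ψ p) p := by
    intro p hp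
    exact (((hψ1.differentiableOn one_ne_zero).differentiableAt
      (isOpen_Ioo.mem_nhds (hsubO hp)))).hasDerivAt
  have hψ'cd : ContDiffOn ℝ 1 (deriv ψ) (Set.Ioo a b \ {p₀}) :=
    hψ2.deriv_of_isOpen hO' (by norm_num)
  have hψ'd : ∀ p ∈ Set.Icc c d, HasDerivAt (deriv ψ) (deriv (deriv ψ) p) p := by
    intro p hp
    exact ((hψ'cd.differentiableOn one_ne_zero).differentiableAt
      (hO'.mem_nhds (hsubO' hp))).hasDerivAt
  have hψ''c : ContinuousOn (deriv (deriv ψ)) (Set.Icc c d) :=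
    (hψ'cd.continuousOn_deriv_of_isOpen hO' le_rfl).mono hsubO'
  have hψ'cont : ContinuousOn (deriv ψ) (Set.Icc c d) := fun p hp =>
    (hψ'd p hp).continuousAt.continuousWithinAt
  -- lower bound for |deriv ψ|
  have habs : ∀ p ∈ Set.Icc c d, lam ≤ |deriv ψ p| := by
    intro p hp
    rw [hfact p (hsubO hp), abs_mul, abs_of_nonneg (Real.rpow_nonneg (abs_nonneg _) _)]
    rw [hlamdef, mul_comm]
    apply mul_le_mul (Real.rpow_le_rpow hδ0.le (hfar p hp) (by linarith))
      (hm p (hsubIcc hp)) hm0.le (Real.rpow_nonneg (abs_nonneg _) _)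
  have hψne : ∀ p ∈ Set.Icc c d, deriv ψ p ≠ 0 := by
    intro p hp h0
    have := habs p hp
    rw [h0, abs_zero] at this
    linarith
  -- constant sign of deriv ψ on Icc c d
  have hsign : (∀ p ∈ Set.Icc c d, lam ≤ deriv ψ p) ∨ (∀ p ∈ Set.Icc c d, deriv ψ p ≤ -lam) := by
    rcases const_sign_of_ne hcd hψ'cont hψne with hpos | hneg
    · left
      intro p hp
      have h1 := habs p hp
      rwa [abs_of_pos (hpos p hp)] at h1
    · right
      intro p hp
      have h1 := habs p hp
      rw [abs_of_neg (hneg p hp)] at h1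
      linarith
  -- sign of second derivative from monotonicity
  have hccl : (∀ p ∈ Set.Icc c d, 0 ≤ deriv (deriv ψ) p) ∨
      (∀ p ∈ Set.Icc c d, deriv (deriv ψ) p ≤ 0) := by
    rcases hside with hL | hR
    · have hSopen : IsOpen {p ∈ Set.Ioo a b | p < p₀} := by
        have : {p ∈ Set.Ioo a b | p < p₀} = Set.Ioo a b ∩ Set.Iio p₀ := rfl
        rw [this]
        exact isOpen_Ioo.inter isOpen_Iio
      have hsubS : Set.Icc c d ⊆ {p ∈ Set.Ioo a b | p < p₀} := fun p hp =>
        ⟨hsubO hp, hL p hp⟩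
      rcases hmono₁ with hmon | hant
      · left
        intro p hp
        exact mono_deriv_nonneg_aux hSopen hmon (hsubS hp) (hψ'd p hp)
      · right
        intro p hp
        have : 0 ≤ -deriv (deriv ψ) p := by
          apply mono_deriv_nonneg_aux hSopen
            (fun x hx y hy hxy => neg_le_neg (hant hx hy hxy)) (hsubS hp) (hψ'd p hp).neg
        linarith
    · have hSopen : IsOpen {p ∈ Set.Ioo a b | p₀ < p} := by
        have : {p ∈ Set.Ioo a b | p₀ < p} = Set.Ioo a b ∩ Set.Ioi p₀ := rfl
        rw [this]
        exact isOpen_Ioo.inter isOpen_Ioi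
      have hsubS : Set.Icc c d ⊆ {p ∈ Set.Ioo a b | p₀ < p} := fun p hp =>
        ⟨hsubO hp, hR p hp⟩
      rcases hmono₂ with hmon | hant
      · left
        intro p hp
        exact mono_deriv_nonneg_aux hSopen hmon (hsubS hp) (hψ'd p hp)
      · right
        intro p hp
        have : 0 ≤ -deriv (deriv ψ) p := by
          apply mono_deriv_nonneg_aux hSopen
            (fun x hx y hy hxy => neg_le_neg (hant hx hy hxy)) (hsubS hp) (hψ'd p hp).neg
        linarith
  -- kernel estimate
  have hker : ∀ x ∈ Set.Icc c d, ‖∫ p in c..x, Complex.exp (Complex.I * ω * ψ p)‖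
      ≤ 2 / (ω * lam) := by
    intro x hx
    have hsub : Set.Icc c x ⊆ Set.Icc c d := Set.Icc_subset_Icc le_rfl hx.2
    apply vdc_kernel ψ ω lam c x hω hlam hx.1
    · exact fun p hp => hψd p (hsub hp)
    · exact fun p hp => hψ'd p (hsub hp)
    · exact hψ''c.mono hsub
    · rcases hsign with h | h
      · exact Or.inl fun p hp => h p (hsub hp)
      · exact Or.inr fun p hp => h p (hsub hp)
    · rcases hccl with h | h
      · exact Or.inl fun p hp => h p (hsub hp)
      · exact Or.inr fun p hp => h p (hsub hp)
  -- the amplitude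
  set V : ℝ → ℂ := fun p => (((p - p₁) ^ (μ - 1) : ℝ) : ℂ) * ut p with hV
  have hp₁c : ∀ p ∈ Set.Icc c d, 0 < p - p₁ := fun p hp => by
    have := hp.1; linarith
  have hVc : ContinuousOn V (Set.Icc c d) := by
    apply ContinuousOn.mul
    · apply Complex.continuous_ofReal.comp_continuousOn
      apply ContinuousOn.rpow_const (by fun_prop)
      intro p hp
      exact Or.inl (ne_of_gt (hp₁c p hp))
    · exact hutc.mono hsubIcc
  set D : ℝ → ℂ := fun p => (((μ - 1) * (p - p₁) ^ (μ - 2) : ℝ) : ℂ) * ut p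
    + (((p - p₁) ^ (μ - 1) : ℝ) : ℂ) * deriv ut p with hD
  have hVd : ∀ p ∈ Set.Ioo c d, HasDerivAt V (D p) p := by
    intro p hp
    have hp' : 0 < p - p₁ := hp₁c p ⟨hp.1.le, hp.2.le⟩
    have h1 : HasDerivAt (fun q : ℝ => (q - p₁) ^ (μ - 1)) (1 * (μ - 1) * (p - p₁) ^ (μ - 1 - 1)) p := by
      have := ((hasDerivAt_id p).sub_const p₁).rpow_const (p := μ - 1) (Or.inl (ne_of_gt hp'))
      simpa using this
    have h2 : HasDerivAt ut (deriv ut p) p :=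
      (hutd p ⟨by linarith [hp.1, hc, hδ0], lt_of_lt_of_le hp.2 hd⟩).hasDerivAt
    have h3 := (h1.ofReal_comp).mul h2
    refine h3.congr_deriv ?_
    rw [hD]
    have : μ - 1 - 1 = μ - 2 := by ring
    rw [this]
    push_cast
    ring
  have hVderiv : ∀ p ∈ Set.Ioo c d, deriv V p = D p := fun p hp => (hVd p hp).deriv
  -- integrability of D
  have huIcc : Set.uIcc c d = Set.Icc c d := Set.uIcc_of_le hcd
  have hD1c : ContinuousOn (fun p => (((μ - 1) * (p - p₁) ^ (μ - 2) : ℝ) : ℂ) * ut p)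
      (Set.Icc c d) := by
    apply ContinuousOn.mul
    · apply Complex.continuous_ofReal.comp_continuousOn
      apply ContinuousOn.mul continuousOn_const
      apply ContinuousOn.rpow_const (by fun_prop)
      intro p hp
      exact Or.inl (ne_of_gt (hp₁c p hp))
    · exact hutc.mono hsubIcc
  have hutint' : IntervalIntegrable (deriv ut) volume c d := by
    apply hutint.mono_set
    rw [huIcc, Set.uIcc_of_le (by linarith : p₁ ≤ p₂)]
    exact hsubIcc
  have hD2int : IntervalIntegrable (fun p => (((p - p₁) ^ (μ - 1) : ℝ) : ℂ) * deriv ut p)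
      volume c d := by
    apply IntervalIntegrable.continuousOn_mul hutint'
    rw [huIcc]
    apply Complex.continuous_ofReal.comp_continuousOn
    apply ContinuousOn.rpow_const (by fun_prop)
    intro p hp
    exact Or.inl (ne_of_gt (hp₁c p hp))
  have hDint : IntervalIntegrable D volume c d := by
    rw [hD]
    exact (ContinuousOn.intervalIntegrable (by rw [huIcc]; exact hD1c)).add hD2int
  have haeeq : (fun p => deriv V p) =ᵐ[volume.restrict (Set.uIoc c d)] D := by
    rw [Set.uIoc_of_le hcd]
    have hd0 : ∀ᵐ p : ℝ ∂(volume.restrict (Set.Ioc c d)), p ≠ d := by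
      refine (MeasureTheory.ae_restrict_of_ae ?_)
      have : (volume : Measure ℝ) {d} = 0 := measure_singleton d
      exact (MeasureTheory.measure_eq_zero_iff_ae_notMem.mp this).mono (by simp)
    have hmem : ∀ᵐ p : ℝ ∂(volume.restrict (Set.Ioc c d)), p ∈ Set.Ioc c d :=
      MeasureTheory.ae_restrict_mem measurableSet_Ioc
    filter_upwards [hd0, hmem] with p hpd hpm
    exact hVderiv p ⟨hpm.1, lt_of_le_of_ne hpm.2 hpd⟩
  have hV'int : IntervalIntegrable (deriv V) volume c d := by
    rw [intervalIntegrable_iff] at hDint ⊢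
    exact hDint.congr haeeq.symm
  -- Abel bound
  have hEcont : ContinuousOn (fun p => Complex.exp (Complex.I * ω * ψ p)) (Set.Icc c d) := by
    apply Complex.continuous_exp.comp_continuousOn
    apply ContinuousOn.mul continuousOn_const
    exact Complex.continuous_ofReal.comp_continuousOn
      ((hψ1.continuousOn).mono hsubO)
  have habel := abel_bound V (fun p => Complex.exp (Complex.I * ω * ψ p)) c d (2 / (ω * lam))
    hcd hEcont hker hVc (fun p hp => by rw [hVderiv p hp]; exact hVd p hp) hV'int
  -- norm of the integral of deriv V
  have hδle : ∀ p ∈ Set.Icc c d, (p - p₁) ^ (μ - 1) ≤ δ ^ (μ - 1) := by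
    intro p hp
    exact Real.rpow_le_rpow_of_nonpos hδ0 (by linarith [hp.1]) (by linarith)
  have hnormint : (∫ p in c..d, ‖deriv V p‖)
      ≤ M * δ ^ (μ - 1) + δ ^ (μ - 1) * ∫ p in c..d, ‖deriv ut p‖ := by
    have e0 : (∫ p in c..d, ‖deriv V p‖) = ∫ p in c..d, ‖D p‖ := by
      rw [intervalIntegral.integral_of_le hcd, intervalIntegral.integral_of_le hcd]
      apply MeasureTheory.integral_congr_ae
      rw [Set.uIoc_of_le hcd] at haeeq
      exact haeeq.fun_comp norm
    rw [e0]
    set g₁ : ℝ → ℝ := fun p => (1 - μ) * (p - p₁) ^ (μ - 2) * M with hg₁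
    set g₂ : ℝ → ℝ := fun p => δ ^ (μ - 1) * ‖deriv ut p‖ with hg₂
    have hg₁c : ContinuousOn g₁ (Set.Icc c d) := by
      apply ContinuousOn.mul _ continuousOn_const
      apply ContinuousOn.mul continuousOn_const
      apply ContinuousOn.rpow_const (by fun_prop)
      intro p hp
      exact Or.inl (ne_of_gt (hp₁c p hp))
    have hg₁int : IntervalIntegrable g₁ volume c d :=
      ContinuousOn.intervalIntegrable (by rw [huIcc]; exact hg₁c)
    have hg₂int : IntervalIntegrable g₂ volume c d := (hutint'.norm).const_mul _
    have hmono : (∫ p in c..d, ‖D p‖) ≤ ∫ p in c..d, (g₁ p + g₂ p) := by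
      apply intervalIntegral.integral_mono_on hcd hDint.norm (hg₁int.add hg₂int)
      intro p hp
      have hb1 : ‖(((μ - 1) * (p - p₁) ^ (μ - 2) : ℝ) : ℂ) * ut p‖ ≤ g₁ p := by
        rw [norm_mul, Complex.norm_real, Real.norm_eq_abs, abs_mul,
          abs_of_nonneg (Real.rpow_nonneg (by linarith [hp₁c p hp]) _),
          abs_of_nonpos (by linarith : μ - 1 ≤ 0), hg₁]
        have := hM p (hsubIcc hp)
        have hrnn : (0:ℝ) ≤ (p - p₁) ^ (μ - 2) := Real.rpow_nonneg (by linarith [hp₁c p hp]) _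
        calc -(μ - 1) * (p - p₁) ^ (μ - 2) * ‖ut p‖
            ≤ -(μ - 1) * (p - p₁) ^ (μ - 2) * M := by
              apply mul_le_mul_of_nonneg_left this
              apply mul_nonneg (by linarith) hrnn
          _ = (1 - μ) * (p - p₁) ^ (μ - 2) * M := by ring
      have hb2 : ‖(((p - p₁) ^ (μ - 1) : ℝ) : ℂ) * deriv ut p‖ ≤ g₂ p := by
        rw [norm_mul, Complex.norm_real, Real.norm_eq_abs,
          abs_of_nonneg (Real.rpow_nonneg (by linarith [hp₁c p hp]) _), hg₂]
        exact mul_le_mul_of_nonneg_right (hδle p hp) (norm_nonneg _)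
      calc ‖D p‖ ≤ ‖(((μ - 1) * (p - p₁) ^ (μ - 2) : ℝ) : ℂ) * ut p‖
            + ‖(((p - p₁) ^ (μ - 1) : ℝ) : ℂ) * deriv ut p‖ := norm_add_le _ _
        _ ≤ g₁ p + g₂ p := add_le_add hb1 hb2
    have hsplit2 : (∫ p in c..d, (g₁ p + g₂ p)) = (∫ p in c..d, g₁ p) + ∫ p in c..d, g₂ p :=
      intervalIntegral.integral_add hg₁int hg₂int
    have hg₁val : (∫ p in c..d, g₁ p) ≤ M * δ ^ (μ - 1) := by
      have hant : ∀ p ∈ Set.uIcc c d,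
          HasDerivAt (fun q : ℝ => -((q - p₁) ^ (μ - 1))) ((1 - μ) * (p - p₁) ^ (μ - 2)) p := by
        intro p hp
        rw [huIcc] at hp
        have h1 := (((hasDerivAt_id p).sub_const p₁).rpow_const (p := μ - 1)
          (Or.inl (ne_of_gt (hp₁c p hp)))).neg
        refine h1.congr_deriv ?_
        have : μ - 1 - 1 = μ - 2 := by ring
        simp [this]
        ring
      have hint1 : IntervalIntegrable (fun p => (1 - μ) * (p - p₁) ^ (μ - 2)) volume c d := by
        apply ContinuousOn.intervalIntegrable
        rw [huIcc]
        apply ContinuousOn.mul continuousOn_const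
        apply ContinuousOn.rpow_const (by fun_prop)
        intro p hp
        exact Or.inl (ne_of_gt (hp₁c p hp))
      have hftc := intervalIntegral.integral_eq_sub_of_hasDerivAt hant hint1
      have e1 : (∫ p in c..d, g₁ p) = (∫ p in c..d, (1 - μ) * (p - p₁) ^ (μ - 2)) * M := by
        rw [← intervalIntegral.integral_mul_const]
      rw [e1, hftc]
      have h2 : -((d - p₁) ^ (μ - 1)) - -((c - p₁) ^ (μ - 1))
          ≤ δ ^ (μ - 1) := by
        have := hδle c ⟨le_rfl, hcd⟩
        have hdn : (0:ℝ) ≤ (d - p₁) ^ (μ - 1) :=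
          Real.rpow_nonneg (by linarith [hp₁c d ⟨hcd, le_rfl⟩]) _
        linarith
      calc (-((d - p₁) ^ (μ - 1)) - -((c - p₁) ^ (μ - 1))) * M ≤ δ ^ (μ - 1) * M :=
            mul_le_mul_of_nonneg_right h2 hM0
        _ = M * δ ^ (μ - 1) := mul_comm _ _
    have hg₂val : (∫ p in c..d, g₂ p) = δ ^ (μ - 1) * ∫ p in c..d, ‖deriv ut p‖ := by
      rw [hg₂, intervalIntegral.integral_const_mul]
    linarith [hmono, hsplit2 ▸ hmono]
  have hVdn : ‖V d‖ ≤ M * δ ^ (μ - 1) := by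
    rw [hV]
    simp only [norm_mul, Complex.norm_real, Real.norm_eq_abs]
    rw [abs_of_nonneg (Real.rpow_nonneg (by linarith [hp₁c d ⟨hcd, le_rfl⟩]) _)]
    calc (d - p₁) ^ (μ - 1) * ‖ut d‖ ≤ δ ^ (μ - 1) * M := by
          apply mul_le_mul (hδle d ⟨hcd, le_rfl⟩) (hM d (hsubIcc ⟨hcd, le_rfl⟩)) (norm_nonneg _)
            (Real.rpow_nonneg hδ0.le _)
      _ = M * δ ^ (μ - 1) := mul_comm _ _
  refine habel.trans ?_
  have hB : 2 / (ω * lam) = 2 * δ / m := by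
    have hρ0 : ρ ≠ 0 := by linarith
    have hδρ : δ ^ ρ = ω⁻¹ := by
      rw [hδ, ← Real.rpow_mul hω.le]
      rw [show -(1/ρ) * ρ = -1 by field_simp]
      exact Real.rpow_neg_one ω
    have hωlam : ω * lam = m / δ := by
      rw [hlamdef, show ρ - 1 = ρ - (1:ℝ) by rfl, Real.rpow_sub hδ0, hδρ, Real.rpow_one]
      field_simp
    rw [hωlam, div_div_eq_mul_div]
  rw [hB]
  have hBnn : 0 ≤ 2 * δ / m := by positivity
  calc 2 * δ / m * (‖V d‖ + ∫ p in c..d, ‖deriv V p‖)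
      ≤ 2 * δ / m * (M * δ ^ (μ - 1) + (M * δ ^ (μ - 1) + δ ^ (μ - 1) * ∫ p in c..d, ‖deriv ut p‖)) := by
        apply mul_le_mul_of_nonneg_left _ hBnn
        exact add_le_add hVdn hnormint
    _ = 2 * δ / m * (2 * M * δ ^ (μ - 1) + δ ^ (μ - 1) * ∫ p in c..d, ‖deriv ut p‖) := by ring

/-- Extension of the van der Corput Lemma: phase with a stationary point `p₀`
of order `ρ - 1` (anywhere in the open interval `I = (a,b) ⊇ [p₁,p₂]`) and
amplitude with an integrable singular point of strength `μ - 1` at `p₁`. -/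
theorem stmt_7 (ρ μ a b p₁ p₂ p₀ : ℝ) (hρ : 1 < ρ) (hμ : μ ∈ Set.Ioc (0:ℝ) 1)
    (hI : Set.Icc p₁ p₂ ⊆ Set.Ioo a b) (hp : p₁ < p₂) (hp₀ : p₀ ∈ Set.Ioo a b)
    (ψ ψt : ℝ → ℝ)
    (hψ1 : ContDiffOn ℝ 1 ψ (Set.Ioo a b))
    (hψ2 : ContDiffOn ℝ 2 ψ (Set.Ioo a b \ {p₀}))
    (hfact : ∀ p ∈ Set.Ioo a b, deriv ψ p = |p - p₀| ^ (ρ - 1) * ψt p)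
    (hψtc : ContinuousOn (fun p => |ψt p|) (Set.Ioo a b))
    (hψt0 : ∀ p ∈ Set.Ioo a b, ψt p ≠ 0)
    (hmono₁ : MonotoneOn (deriv ψ) {p ∈ Set.Ioo a b | p < p₀} ∨
      AntitoneOn (deriv ψ) {p ∈ Set.Ioo a b | p < p₀})
    (hmono₂ : MonotoneOn (deriv ψ) {p ∈ Set.Ioo a b | p₀ < p} ∨
      AntitoneOn (deriv ψ) {p ∈ Set.Ioo a b | p₀ < p})
    (U ut : ℝ → ℂ)
    (hU : ∀ p ∈ Set.Ioc p₁ p₂, U p = ((p - p₁) ^ (μ - 1) : ℝ) * ut p)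
    (hutc : ContinuousOn ut (Set.Icc p₁ p₂))
    (hutd : ∀ p ∈ Set.Ioo p₁ p₂, DifferentiableAt ℝ ut p)
    (hutint : IntervalIntegrable (deriv ut) volume p₁ p₂)
    (hut0 : μ ≠ 1 → ut p₁ ≠ 0) :
    ∀ ω : ℝ, 0 < ω →
      ‖∫ p in p₁..p₂, U p * Complex.exp (Complex.I * ω * ψ p)‖ ≤
        ((3 / μ) * (⨆ p : Set.Icc p₁ p₂, ‖ut p‖) +
          (8 * (⨆ p : Set.Icc p₁ p₂, ‖ut p‖) +
            2 * ∫ p in p₁..p₂, ‖deriv ut p‖) *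
          (⨅ p : Set.Icc p₁ p₂, |ψt p|)⁻¹) * ω ^ (-(μ / ρ)) := by
  intro ω hω
  obtain ⟨hμ0, hμ1⟩ := hμ
  haveI : Nonempty (Set.Icc p₁ p₂) := Set.Nonempty.to_subtype (Set.nonempty_Icc.2 hp.le)
  set M : ℝ := ⨆ p : Set.Icc p₁ p₂, ‖ut p‖ with hMdef
  set m : ℝ := ⨅ p : Set.Icc p₁ p₂, |ψt p| with hmdef
  set N : ℝ := ∫ p in p₁..p₂, ‖deriv ut p‖ with hNdef
  -- basic facts about M, m, N
  obtain ⟨CM, hCM⟩ := IsCompact.exists_bound_of_continuousOn isCompact_Icc hutc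
  have hbdd : BddAbove (Set.range fun p : Set.Icc p₁ p₂ => ‖ut p‖) := by
    refine ⟨CM, ?_⟩
    rintro y ⟨q, rfl⟩
    exact hCM q q.2
  have hM : ∀ p ∈ Set.Icc p₁ p₂, ‖ut p‖ ≤ M := fun p hp =>
    le_ciSup hbdd (⟨p, hp⟩ : Set.Icc p₁ p₂)
  have hM0 : 0 ≤ M := le_trans (norm_nonneg _) (hM p₁ ⟨le_rfl, hp.le⟩)
  have hm : ∀ p ∈ Set.Icc p₁ p₂, m ≤ |ψt p| := fun p hp =>
    ciInf_le ⟨0, by rintro y ⟨r, rfl⟩; exact abs_nonneg _⟩ (⟨p, hp⟩ : Set.Icc p₁ p₂)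
  obtain ⟨q, hq, hqmin⟩ := IsCompact.exists_isMinOn isCompact_Icc
    (Set.nonempty_Icc.2 hp.le) (hψtc.mono hI)
  have hm0 : 0 < m := by
    have h1 : 0 < |ψt q| := abs_pos.2 (hψt0 q (hI hq))
    have h2 : |ψt q| ≤ m := le_ciInf fun i => hqmin i.2
    linarith
  have hN0 : 0 ≤ N := intervalIntegral.integral_nonneg hp.le fun u _ => norm_nonneg _
  set δ : ℝ := ω ^ (-(1/ρ)) with hδdef
  have hδ0 : 0 < δ := Real.rpow_pos_of_pos hω _
  have hδμ' : δ ^ μ = ω ^ (-(μ / ρ)) := by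
    rw [hδdef, ← Real.rpow_mul hω.le]
    congr 1
    ring
  have hδμ : δ ^ (μ - 1) * δ = δ ^ μ := by
    rw [← Real.rpow_add_one hδ0.ne' (μ - 1)]
    congr 1
    ring
  set E : ℝ → ℂ := fun p => Complex.exp (Complex.I * ω * ψ p) with hE
  set W : ℝ → ℂ := fun p => (((p - p₁) ^ (μ - 1) : ℝ) : ℂ) * ut p with hW
  have hEnorm : ∀ p, ‖E p‖ = 1 := by
    intro p
    simp [hE, Complex.norm_exp]
  have hEcont : ContinuousOn E (Set.Icc p₁ p₂) := by
    apply Complex.continuous_exp.comp_continuousOn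
    apply ContinuousOn.mul continuousOn_const
    exact Complex.continuous_ofReal.comp_continuousOn ((hψ1.continuousOn).mono hI)
  -- replace U by W
  have hUE : (∫ p in p₁..p₂, U p * Complex.exp (Complex.I * ω * ψ p))
      = ∫ p in p₁..p₂, W p * E p := by
    apply intervalIntegral.integral_congr_ae
    apply Filter.Eventually.of_forall
    intro x hx
    rw [Set.uIoc_of_le hp.le] at hx
    rw [hU x hx]
  -- integrability
  have rint : IntervalIntegrable (fun p : ℝ => (p - p₁) ^ (μ - 1)) volume p₁ p₂ := by
    have h0 := intervalIntegral.intervalIntegrable_rpow' (a := 0) (b := p₂ - p₁)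
      (r := μ - 1) (by linarith)
    have h1 := h0.comp_sub_right p₁
    simpa using h1
  have rintC : IntervalIntegrable (fun p : ℝ => (((p - p₁) ^ (μ - 1) : ℝ) : ℂ))
      volume p₁ p₂ := by
    rw [intervalIntegrable_iff] at rint ⊢
    exact rint.ofReal
  have Wint : IntervalIntegrable W volume p₁ p₂ :=
    rintC.mul_continuousOn (by rw [Set.uIcc_of_le hp.le]; exact hutc)
  have WEint : IntervalIntegrable (fun p => W p * E p) volume p₁ p₂ :=
    Wint.mul_continuousOn (by rw [Set.uIcc_of_le hp.le]; exact hEcont)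
  have getint : ∀ x y, p₁ ≤ x → x ≤ y → y ≤ p₂ →
      IntervalIntegrable (fun p => W p * E p) volume x y := by
    intro x y hx hxy hy
    apply WEint.mono_set
    rw [Set.uIcc_of_le hxy, Set.uIcc_of_le hp.le]
    exact Set.Icc_subset_Icc hx hy
  have nint : ∀ x y, p₁ ≤ x → x ≤ y → y ≤ p₂ →
      IntervalIntegrable (fun p => ‖deriv ut p‖) volume x y := by
    intro x y hx hxy hy
    apply IntervalIntegrable.norm
    apply hutint.mono_set
    rw [Set.uIcc_of_le hxy, Set.uIcc_of_le hp.le]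
    exact Set.Icc_subset_Icc hx hy
  -- pointwise norm of W·E
  have hWE : ∀ p ∈ Set.Icc p₁ p₂, ‖W p * E p‖ = (p - p₁) ^ (μ - 1) * ‖ut p‖ := by
    intro p hp'
    rw [norm_mul, hEnorm p, mul_one, hW]
    rw [norm_mul, Complex.norm_real, Real.norm_eq_abs,
      abs_of_nonneg (Real.rpow_nonneg (by linarith [hp'.1]) _)]
  -- bound near the singular endpoint
  have near : ∀ e, p₁ ≤ e → e ≤ p₂ → ‖∫ p in p₁..e, W p * E p‖ ≤ M * (e - p₁) ^ μ / μ := by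
    intro e he1 he2
    have h1 := intervalIntegral.norm_integral_le_integral_norm
      (f := fun p => W p * E p) (μ := volume) he1
    have h2 : (∫ p in p₁..e, ‖W p * E p‖) ≤ ∫ p in p₁..e, M * (p - p₁) ^ (μ - 1) := by
      apply intervalIntegral.integral_mono_on he1 (getint p₁ e le_rfl he1 he2).norm
      · exact ((rint.mono_set (by
          rw [Set.uIcc_of_le he1, Set.uIcc_of_le hp.le]
          exact Set.Icc_subset_Icc le_rfl he2)).const_mul M)
      · intro p hp'
        rw [hWE p ⟨hp'.1, le_trans hp'.2 he2⟩]
        rw [mul_comm M _]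
        apply mul_le_mul_of_nonneg_left (hM p ⟨hp'.1, le_trans hp'.2 he2⟩)
          (Real.rpow_nonneg (by linarith [hp'.1]) _)
    have h3 : (∫ p in p₁..e, M * (p - p₁) ^ (μ - 1)) = M * ((e - p₁) ^ μ / μ) := by
      rw [intervalIntegral.integral_const_mul]
      congr 1
      have h4 : (∫ p in p₁..e, (p - p₁) ^ (μ - 1))
          = ∫ t in (p₁ - p₁)..(e - p₁), t ^ (μ - 1) :=
        intervalIntegral.integral_comp_sub_right (fun t => t ^ (μ - 1)) p₁
      rw [h4, sub_self]
      rw [integral_rpow (Or.inl (by linarith : (-1:ℝ) < μ - 1))]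
      rw [show μ - 1 + 1 = μ by ring, Real.zero_rpow (by linarith : μ ≠ 0)]
      ring
    calc ‖∫ p in p₁..e, W p * E p‖ ≤ _ := h1
      _ ≤ M * ((e - p₁) ^ μ / μ) := le_of_le_of_eq h2 h3
      _ = M * (e - p₁) ^ μ / μ := by ring
  -- bound away from the singular endpoint, trivial estimate
  have mid : ∀ c d, p₁ + δ ≤ c → c ≤ d → d ≤ p₂ →
      ‖∫ p in c..d, W p * E p‖ ≤ M * δ ^ (μ - 1) * (d - c) := by
    intro c d hc hcd hd2
    have h1 : ∀ x ∈ Set.uIoc c d, ‖W x * E x‖ ≤ M * δ ^ (μ - 1) := by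
      intro x hx
      rw [Set.uIoc_of_le hcd] at hx
      have hx' : x ∈ Set.Icc p₁ p₂ := ⟨by linarith [hx.1.le], le_trans hx.2 hd2⟩
      rw [hWE x hx']
      have h2 : (x - p₁) ^ (μ - 1) ≤ δ ^ (μ - 1) :=
        Real.rpow_le_rpow_of_nonpos hδ0 (by linarith [hx.1.le]) (by linarith)
      calc (x - p₁) ^ (μ - 1) * ‖ut x‖ ≤ δ ^ (μ - 1) * M :=
            mul_le_mul h2 (hM x hx') (norm_nonneg _) (Real.rpow_nonneg hδ0.le _)
        _ = M * δ ^ (μ - 1) := mul_comm _ _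
    have := intervalIntegral.norm_integral_le_of_norm_le_const h1
    rwa [abs_of_nonneg (by linarith : (0:ℝ) ≤ d - c)] at this
  -- final assembly
  rw [hUE]
  have hRHS : ((3 / μ) * M + (8 * M + 2 * N) * m⁻¹) * ω ^ (-(μ / ρ))
      = ((3 / μ) * M + (8 * M + 2 * N) * m⁻¹) * δ ^ μ := by rw [hδμ']
  rw [hRHS]
  have hA0 : 0 ≤ δ ^ μ := Real.rpow_nonneg hδ0.le μ
  have hd1 : 0 ≤ δ ^ (μ - 1) := Real.rpow_nonneg hδ0.le _
  have hX0 : 0 ≤ (8 * M + 2 * N) * m⁻¹ :=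
    mul_nonneg (by linarith) (inv_nonneg.2 hm0.le)
  by_cases hcase : p₂ ≤ p₁ + δ
  · have h1 := near p₂ hp.le le_rfl
    have h2 : (p₂ - p₁) ^ μ ≤ δ ^ μ :=
      Real.rpow_le_rpow (by linarith) (by linarith) hμ0.le
    have h3 : M * (p₂ - p₁) ^ μ / μ ≤ M * δ ^ μ / μ :=
      (div_le_div_iff_of_pos_right hμ0).2 (mul_le_mul_of_nonneg_left h2 hM0)
    have hA0' : 0 ≤ M * δ ^ μ := mul_nonneg hM0 (Real.rpow_nonneg hδ0.le μ)
    have h4 : M * δ ^ μ / μ ≤ (3 / μ * M) * δ ^ μ := by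
      rw [show (3 / μ * M) * δ ^ μ = 3 * (M * δ ^ μ) / μ by ring]
      exact (div_le_div_iff_of_pos_right hμ0).2 (by linarith)
    have h5 : (3 / μ * M) * δ ^ μ ≤ ((3 / μ) * M + (8 * M + 2 * N) * m⁻¹) * δ ^ μ := by
      apply mul_le_mul_of_nonneg_right _ hA0
      linarith
    linarith
  · push_neg at hcase
    set q₁ : ℝ := p₁ + δ with hq₁def
    set mid₁ : ℝ := min p₂ (max q₁ (p₀ - δ)) with hmid₁def
    set mid₂ : ℝ := min p₂ (max q₁ (p₀ + δ)) with hmid₂def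
    have h0 : p₁ ≤ q₁ := by rw [hq₁def]; linarith
    have hq₁p₂ : q₁ ≤ p₂ := hcase.le
    have h1 : q₁ ≤ mid₁ := le_min hq₁p₂ (le_max_left _ _)
    have h2 : mid₁ ≤ mid₂ := min_le_min le_rfl (max_le_max le_rfl (by linarith))
    have h3 : mid₂ ≤ p₂ := min_le_left _ _
    -- split the integral into four pieces
    have i1 := getint p₁ q₁ le_rfl h0 hq₁p₂
    have i2 := getint q₁ mid₁ h0 h1 (le_trans h2 h3)
    have i3 := getint mid₁ mid₂ (le_trans h0 h1) h2 h3
    have i4 := getint mid₂ p₂ (le_trans h0 (le_trans h1 h2)) h3 le_rfl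
    have e1 := intervalIntegral.integral_add_adjacent_intervals i1 i2
    have e2 := intervalIntegral.integral_add_adjacent_intervals (i1.trans i2) i3
    have e3 := intervalIntegral.integral_add_adjacent_intervals ((i1.trans i2).trans i3) i4
    have hsplit : (∫ p in p₁..p₂, W p * E p)
        = (((∫ p in p₁..q₁, W p * E p) + ∫ p in q₁..mid₁, W p * E p)
          + ∫ p in mid₁..mid₂, W p * E p) + ∫ p in mid₂..p₂, W p * E p := by
      rw [e1, e2, e3]
    -- piece 1
    have b1 : ‖∫ p in p₁..q₁, W p * E p‖ ≤ M * δ ^ μ / μ := by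
      have := near q₁ h0 hq₁p₂
      rwa [hq₁def, add_sub_cancel_left] at this
    -- piece 3
    have hlen : mid₂ - mid₁ ≤ 2 * δ := by
      have k1 : max q₁ (p₀ + δ) ≤ max q₁ (p₀ - δ) + 2 * δ :=
        max_le (by linarith [le_max_left q₁ (p₀ - δ), hδ0])
          (by linarith [le_max_right q₁ (p₀ - δ)])
      rcases min_choice p₂ (max q₁ (p₀ - δ)) with hch | hch
      · have : mid₂ ≤ p₂ := min_le_left _ _
        rw [hmid₁def, hch] at *
        linarith [hδ0]
      · have : mid₂ ≤ max q₁ (p₀ + δ) := min_le_right _ _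
        rw [hmid₁def, hch] at *
        linarith
    have b3 : ‖∫ p in mid₁..mid₂, W p * E p‖ ≤ 2 * M * δ ^ μ := by
      have := mid mid₁ mid₂ h1 h2 h3
      calc ‖∫ p in mid₁..mid₂, W p * E p‖ ≤ M * δ ^ (μ - 1) * (mid₂ - mid₁) := this
        _ ≤ M * δ ^ (μ - 1) * (2 * δ) :=
            mul_le_mul_of_nonneg_left hlen (mul_nonneg hM0 hd1)
        _ = 2 * M * (δ ^ (μ - 1) * δ) := by ring
        _ = 2 * M * δ ^ μ := by rw [hδμ]
    -- pieces 2 and 4 : oscillatory bounds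
    have T2nn : 0 ≤ 2 * δ / m := div_nonneg (by linarith) hm0.le
    have b2 : ‖∫ p in q₁..mid₁, W p * E p‖
        ≤ 2 * δ / m * (2 * M * δ ^ (μ - 1) + δ ^ (μ - 1) * ∫ p in q₁..mid₁, ‖deriv ut p‖) := by
      rcases eq_or_lt_of_le h1 with heq | hlt
      · rw [← heq, intervalIntegral.integral_same, norm_zero, intervalIntegral.integral_same]
        apply mul_nonneg T2nn
        have : (0:ℝ) ≤ 2 * M * δ ^ (μ - 1) := by positivity
        linarith
      · have hm1 : mid₁ ≤ max q₁ (p₀ - δ) := min_le_right _ _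
        have hmaxl : max q₁ (p₀ - δ) = p₀ - δ := by
          rcases max_choice q₁ (p₀ - δ) with hch | hch
          · rw [hch] at hm1; linarith
          · exact hch
        have hl : mid₁ ≤ p₀ - δ := by rw [hmaxl] at hm1; exact hm1
        apply osc_bound hρ hμ0 hμ1 hω hδdef hI hψ1 hψ2 hfact hmono₁ hmono₂ hutc hutd hutint
          hm hm0 hM le_rfl h1 (le_trans h2 h3)
        · intro p hp'
          have : p ≤ p₀ - δ := le_trans hp'.2 hl
          calc δ ≤ p₀ - p := by linarith
            _ ≤ |p₀ - p| := le_abs_self _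
            _ = |p - p₀| := abs_sub_comm _ _
        · left
          intro p hp'
          have : p ≤ p₀ - δ := le_trans hp'.2 hl
          linarith
    have b4 : ‖∫ p in mid₂..p₂, W p * E p‖
        ≤ 2 * δ / m * (2 * M * δ ^ (μ - 1) + δ ^ (μ - 1) * ∫ p in mid₂..p₂, ‖deriv ut p‖) := by
      rcases eq_or_lt_of_le h3 with heq | hlt
      · rw [heq, intervalIntegral.integral_same, norm_zero, intervalIntegral.integral_same]
        apply mul_nonneg T2nn
        have : (0:ℝ) ≤ 2 * M * δ ^ (μ - 1) := by positivity
        linarith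
      · have hch : mid₂ = max q₁ (p₀ + δ) := by
          rcases min_choice p₂ (max q₁ (p₀ + δ)) with hch | hch
          · rw [hmid₂def] at hlt; rw [hch] at hlt; exact absurd hlt (lt_irrefl _)
          · exact hch
        have hr : p₀ + δ ≤ mid₂ := by rw [hch]; exact le_max_right _ _
        apply osc_bound hρ hμ0 hμ1 hω hδdef hI hψ1 hψ2 hfact hmono₁ hmono₂ hutc hutd hutint
          hm hm0 hM (le_trans h1 h2) h3 le_rfl
        · intro p hp'
          have : p₀ + δ ≤ p := le_trans hr hp'.1
          calc δ ≤ p - p₀ := by linarith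
            _ ≤ |p - p₀| := le_abs_self _
        · right
          intro p hp'
          have : p₀ + δ ≤ p := le_trans hr hp'.1
          linarith [hδ0]
    -- sum of the norm of the derivative integrals
    set I₁ : ℝ := ∫ p in q₁..mid₁, ‖deriv ut p‖ with hI₁def
    set I₂ : ℝ := ∫ p in mid₂..p₂, ‖deriv ut p‖ with hI₂def
    have hIN : I₁ + I₂ ≤ N := by
      have n1 := nint p₁ q₁ le_rfl h0 hq₁p₂
      have n2 := nint q₁ mid₁ h0 h1 (le_trans h2 h3)
      have n3 := nint mid₁ mid₂ (le_trans h0 h1) h2 h3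
      have n4 := nint mid₂ p₂ (le_trans h0 (le_trans h1 h2)) h3 le_rfl
      have f1 := intervalIntegral.integral_add_adjacent_intervals n1 n2
      have f2 := intervalIntegral.integral_add_adjacent_intervals (n1.trans n2) n3
      have f3 := intervalIntegral.integral_add_adjacent_intervals ((n1.trans n2).trans n3) n4
      have g1 : (0:ℝ) ≤ ∫ p in p₁..q₁, ‖deriv ut p‖ :=
        intervalIntegral.integral_nonneg h0 fun u _ => norm_nonneg _
      have g3 : (0:ℝ) ≤ ∫ p in mid₁..mid₂, ‖deriv ut p‖ :=
        intervalIntegral.integral_nonneg h2 fun u _ => norm_nonneg _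
      rw [hNdef]
      rw [← f3, ← f2, ← f1]
      rw [hI₁def, hI₂def]
      linarith
    have hI₁0 : 0 ≤ I₁ := intervalIntegral.integral_nonneg h1 fun u _ => norm_nonneg _
    have hI₂0 : 0 ≤ I₂ := intervalIntegral.integral_nonneg h3 fun u _ => norm_nonneg _
    -- combine
    have hnorm4 : ‖∫ p in p₁..p₂, W p * E p‖
        ≤ ‖∫ p in p₁..q₁, W p * E p‖ + ‖∫ p in q₁..mid₁, W p * E p‖
          + ‖∫ p in mid₁..mid₂, W p * E p‖ + ‖∫ p in mid₂..p₂, W p * E p‖ := by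
      rw [hsplit]
      have l1 := norm_add_le ((((∫ p in p₁..q₁, W p * E p) + ∫ p in q₁..mid₁, W p * E p)
        + ∫ p in mid₁..mid₂, W p * E p)) (∫ p in mid₂..p₂, W p * E p)
      have l2 := norm_add_le (((∫ p in p₁..q₁, W p * E p) + ∫ p in q₁..mid₁, W p * E p))
        (∫ p in mid₁..mid₂, W p * E p)
      have l3 := norm_add_le (∫ p in p₁..q₁, W p * E p) (∫ p in q₁..mid₁, W p * E p)
      linarith
    -- final arithmetic
    have f1 : M * δ ^ μ / μ + 2 * M * δ ^ μ ≤ 3 / μ * M * δ ^ μ := by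
      have hμinv : 1 ≤ 1 / μ := by
        rw [le_div_iff₀ hμ0]
        linarith
      have keynn : 0 ≤ 2 * M * δ ^ μ * (1 / μ - 1) :=
        mul_nonneg (mul_nonneg (by linarith : (0:ℝ) ≤ 2 * M) hA0) (by linarith)
      have key : 2 * M * δ ^ μ * (1 / μ) - 2 * M * δ ^ μ = 2 * M * δ ^ μ * (1 / μ - 1) := by
        ring
      have : 2 * M * δ ^ μ ≤ 2 * M * δ ^ μ * (1 / μ) := by linarith
      have heq : M * δ ^ μ / μ + 2 * M * δ ^ μ * (1 / μ) = 3 / μ * M * δ ^ μ := by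
        field_simp
        ring
      linarith
    have f2 : 2 * δ / m * (2 * M * δ ^ (μ - 1) + δ ^ (μ - 1) * I₁)
        + 2 * δ / m * (2 * M * δ ^ (μ - 1) + δ ^ (μ - 1) * I₂)
        ≤ (8 * M + 2 * N) * m⁻¹ * δ ^ μ := by
      have e4 : 2 * δ / m * (2 * M * δ ^ (μ - 1) + δ ^ (μ - 1) * I₁)
          + 2 * δ / m * (2 * M * δ ^ (μ - 1) + δ ^ (μ - 1) * I₂)
          = 2 * δ / m * (4 * M * δ ^ (μ - 1) + δ ^ (μ - 1) * (I₁ + I₂)) := by ring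
      rw [e4]
      have e5 : 2 * δ / m * (4 * M * δ ^ (μ - 1) + δ ^ (μ - 1) * (I₁ + I₂))
          ≤ 2 * δ / m * (4 * M * δ ^ (μ - 1) + δ ^ (μ - 1) * N) := by
        apply mul_le_mul_of_nonneg_left _ T2nn
        have := mul_le_mul_of_nonneg_left hIN hd1
        linarith
      have e6 : 2 * δ / m * (4 * M * δ ^ (μ - 1) + δ ^ (μ - 1) * N)
          = (8 * M + 2 * N) * m⁻¹ * (δ ^ (μ - 1) * δ) := by
        field_simp
        ring
      rw [e6, hδμ] at e5
      exact e5
    calc ‖∫ p in p₁..p₂, W p * E p‖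
        ≤ ‖∫ p in p₁..q₁, W p * E p‖ + ‖∫ p in q₁..mid₁, W p * E p‖
          + ‖∫ p in mid₁..mid₂, W p * E p‖ + ‖∫ p in mid₂..p₂, W p * E p‖ := hnorm4
      _ ≤ M * δ ^ μ / μ
          + 2 * δ / m * (2 * M * δ ^ (μ - 1) + δ ^ (μ - 1) * I₁)
          + 2 * M * δ ^ μ
          + 2 * δ / m * (2 * M * δ ^ (μ - 1) + δ ^ (μ - 1) * I₂) := by
            rw [hI₁def, hI₂def]
            exact add_le_add (add_le_add (add_le_add b1 b2) b3) b4
      _ ≤ 3 / μ * M * δ ^ μ + (8 * M + 2 * N) * m⁻¹ * δ ^ μ := by linarith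
      _ = ((3 / μ) * M + (8 * M + 2 * N) * m⁻¹) * δ ^ μ := by ring
end osc
end

section
/- Let ρ > 1, μ ∈ (0,1], let I be an open interval containing [p₁,p₂], and p₀ ∈ [p₁,p₂]. Suppose ψ satisfies Assumption (P_{p₀,ρ}) on I (i.e. ψ ∈ C¹(I) ∩ C²(I∖{p₀}), ψ'(p) = |p−p₀|^{ρ−1} ψ̃(p) with |ψ̃| continuous and nonvanishing on I), and that ψ' is monotone on each side of p₀. Suppose U satisfies Assumption (A_{p₁,μ}) (U(p) = (p−p₁)^{μ−1} ũ(p) with ũ continuous on [p₁,p₂], differentiable on (p₁,p₂), ũ' ∈ L¹, ũ(p₁) ≠ 0 if μ ≠ 1). Then for all ω > 0, |∫_{p₁}^{p₂} U(p) e^{iωψ(p)} dp| ≤ [(3/μ)‖ũ‖_∞ + (8‖ũ‖_∞ + 2‖ũ'‖_{L¹})·m^{−1}] · ω^{−μ/ρ}, where m = min_{[p₁,p₂]} |ψ̃|. -/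
open Set MeasureTheory intervalIntegral



lemma deriv_nonneg_of_monotoneOn {f : ℝ → ℝ} {S : Set ℝ} (hS : IsOpen S)
    (hm : MonotoneOn f S) {x : ℝ} (hx : x ∈ S) (hd : DifferentiableAt ℝ f x) :
    0 ≤ deriv f x := by
  have h := hd.hasDerivAt
  rw [hasDerivAt_iff_tendsto_slope] at h
  refine ge_of_tendsto h ?_
  filter_upwards [self_mem_nhdsWithin, mem_nhdsWithin_of_mem_nhds (hS.mem_nhds hx)]
    with y hy1 hy2
  rcases lt_or_gt_of_ne (show y ≠ x from hy1) with h1 | h1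
  · rw [slope_def_field]
    exact div_nonneg_of_nonpos (by simpa using hm hy2 hx h1.le) (by linarith)
  · rw [slope_def_field]
    exact div_nonneg (by simpa using hm hx hy2 h1.le) (by linarith)

lemma deriv_nonpos_of_antitoneOn {f : ℝ → ℝ} {S : Set ℝ} (hS : IsOpen S)
    (hm : AntitoneOn f S) {x : ℝ} (hx : x ∈ S) (hd : DifferentiableAt ℝ f x) :
    deriv f x ≤ 0 := by
  have h := hd.hasDerivAt
  rw [hasDerivAt_iff_tendsto_slope] at h
  refine le_of_tendsto h ?_
  filter_upwards [self_mem_nhdsWithin, mem_nhdsWithin_of_mem_nhds (hS.mem_nhds hx)]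
    with y hy1 hy2
  rcases lt_or_gt_of_ne (show y ≠ x from hy1) with h1 | h1
  · rw [slope_def_field]
    exact div_nonpos_iff.2 (Or.inl ⟨by simpa using hm hy2 hx h1.le, by linarith⟩)
  · rw [slope_def_field]
    exact div_nonpos_iff.2 (Or.inr ⟨by simpa using hm hx hy2 h1.le, by linarith⟩)

lemma abs_inv_sub_inv_le {m' x y : ℝ} (hm' : 0 < m') (hx : m' ≤ x) (hy : m' ≤ y) :
    |x⁻¹ - y⁻¹| ≤ m'⁻¹ := by
  have hx0 : 0 < x := lt_of_lt_of_le hm' hx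
  have hy0 : 0 < y := lt_of_lt_of_le hm' hy
  have h1 : x⁻¹ ≤ m'⁻¹ := inv_anti₀ hm' hx
  have h2 : y⁻¹ ≤ m'⁻¹ := inv_anti₀ hm' hy
  have h3 : 0 ≤ x⁻¹ := le_of_lt (inv_pos.2 hx0)
  have h4 : 0 ≤ y⁻¹ := le_of_lt (inv_pos.2 hy0)
  rw [abs_sub_le_iff]; constructor <;> linarith

lemma psi2_integral_bound {g : ℝ → ℝ} {c d m' : ℝ} (hcd : c ≤ d) (hm' : 0 < m')
    (hgc : ContinuousOn g (Icc c d))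
    (hgd : ∀ p ∈ Icc c d, DifferentiableAt ℝ g p)
    (hg'c : ContinuousOn (deriv g) (Icc c d))
    (hsign : (∀ p ∈ Ioo c d, 0 ≤ deriv g p) ∨ (∀ p ∈ Ioo c d, deriv g p ≤ 0))
    (hlb : ∀ p ∈ Icc c d, m' ≤ |g p|) :
    ∫ p in c..d, |deriv g p| / (g p) ^ 2 ≤ m'⁻¹ := by
  have hne : ∀ p ∈ Icc c d, g p ≠ 0 := by
    intro p hp h0
    have := hlb p hp
    rw [h0, abs_zero] at this
    linarith
  set f : ℝ → ℝ := fun p => deriv g p / (g p) ^ 2 with hf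
  have hfc : ContinuousOn f (Icc c d) :=
    hg'c.div (hgc.pow 2) (fun p hp => pow_ne_zero 2 (hne p hp))
  have hfi : IntervalIntegrable f volume c d :=
    (hfc.mono (by rw [uIcc_of_le hcd])).intervalIntegrable
  have hderiv : ∀ p ∈ uIcc c d, HasDerivAt (fun q => -(g q)⁻¹) (f p) p := by
    intro p hp
    rw [uIcc_of_le hcd] at hp
    have := ((hgd p hp).hasDerivAt.inv (hne p hp)).neg
    refine this.congr_deriv ?_
    simp only [hf]
    ring
  have hFTC : ∫ p in c..d, f p = (g c)⁻¹ - (g d)⁻¹ := by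
    rw [intervalIntegral.integral_eq_sub_of_hasDerivAt hderiv hfi]; ring
  have habsfi : IntervalIntegrable (fun p => |deriv g p| / (g p) ^ 2) volume c d := by
    have : ContinuousOn (fun p => |deriv g p| / (g p) ^ 2) (Icc c d) :=
      hg'c.abs.div (hgc.pow 2) (fun p hp => pow_ne_zero 2 (hne p hp))
    exact (this.mono (by rw [uIcc_of_le hcd])).intervalIntegrable
  have haed : ∀ᵐ x ∂(volume : Measure ℝ), x ≠ d :=
    ae_iff.2 (by simpa using measure_singleton (d : ℝ) (μ := volume))
  have hstep : ∫ p in c..d, |deriv g p| / (g p) ^ 2 ≤ |∫ p in c..d, f p| := by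
    rcases hsign with hs | hs
    · have : ∫ p in c..d, |deriv g p| / (g p) ^ 2 = ∫ p in c..d, f p := by
        apply intervalIntegral.integral_congr_ae
        filter_upwards [haed] with x hx hmem
        rw [uIoc_of_le hcd] at hmem
        have hxo : x ∈ Ioo c d := ⟨hmem.1, lt_of_le_of_ne hmem.2 hx⟩
        rw [hf]; simp only []
        rw [abs_of_nonneg (hs x hxo)]
      rw [this]; exact le_abs_self _
    · have : ∫ p in c..d, |deriv g p| / (g p) ^ 2 = ∫ p in c..d, -f p := by
        apply intervalIntegral.integral_congr_ae
        filter_upwards [haed] with x hx hmem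
        rw [uIoc_of_le hcd] at hmem
        have hxo : x ∈ Ioo c d := ⟨hmem.1, lt_of_le_of_ne hmem.2 hx⟩
        rw [hf]; simp only []
        rw [abs_of_nonpos (hs x hxo), neg_div]
      rw [this, intervalIntegral.integral_neg]
      exact neg_le_abs _
  refine hstep.trans ?_
  rw [hFTC]
  have hc := hlb c ⟨le_rfl, hcd⟩
  have hd := hlb d ⟨hcd, le_rfl⟩
  rcases le_abs.1 hc with hc1 | hc1 <;> rcases le_abs.1 hd with hd1 | hd1
  · exact abs_inv_sub_inv_le hm' hc1 hd1
  · -- g c ≥ m', g d ≤ -m' : contradiction by IVT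
    exfalso
    have h0 : (0 : ℝ) ∈ Icc (g d) (g c) := ⟨by linarith, by linarith⟩
    obtain ⟨z, hz, hz0⟩ := intermediate_value_Icc' hcd hgc h0
    have := hlb z hz
    rw [hz0, abs_zero] at this; linarith
  · exfalso
    have h0 : (0 : ℝ) ∈ Icc (g c) (g d) := ⟨by linarith, by linarith⟩
    obtain ⟨z, hz, hz0⟩ := intermediate_value_Icc hcd hgc h0
    have := hlb z hz
    rw [hz0, abs_zero] at this; linarith
  · have : |(g c)⁻¹ - (g d)⁻¹| = |(-(g d))⁻¹ - (-(g c))⁻¹| := by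
      rw [inv_neg, inv_neg, abs_sub_comm, ← abs_neg]; ring_nf
    rw [this]
    exact abs_inv_sub_inv_le hm' hd1 hc1

section OSC
variable {ψ : ℝ → ℝ} {U U' : ℝ → ℂ} {c d ω m' CU : ℝ} {S : Set ℝ}

lemma osc_bound_s8 (hω : 0 < ω) (hcd : c ≤ d) (hm' : 0 < m')
    (hS : IsOpen S) (hsub : Icc c d ⊆ S)
    (hψd : ∀ p ∈ S, DifferentiableAt ℝ ψ p)
    (hψ'c : ContinuousOn (deriv ψ) S)
    (hψ'd : ∀ p ∈ S, DifferentiableAt ℝ (deriv ψ) p)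
    (hψ''c : ContinuousOn (deriv (deriv ψ)) S)
    (hsign : (∀ p ∈ Ioo c d, 0 ≤ deriv (deriv ψ) p) ∨
      (∀ p ∈ Ioo c d, deriv (deriv ψ) p ≤ 0))
    (hψ'lb : ∀ p ∈ Icc c d, m' ≤ |deriv ψ p|)
    (hUc : ContinuousOn U (Icc c d))
    (hUd : ∀ p ∈ Ioo c d, HasDerivAt U (U' p) p)
    (hU'i : IntervalIntegrable U' volume c d)
    (hCU : ∀ p ∈ Icc c d, ‖U p‖ ≤ CU) :
    ‖∫ p in c..d, U p * Complex.exp (Complex.I * ω * ψ p)‖ ≤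
      (ω * m')⁻¹ * (‖U c‖ + ‖U d‖ + CU + ∫ p in c..d, ‖U' p‖) := by
  have hωm' : 0 < ω * m' := mul_pos hω hm'
  set E : ℝ → ℂ := fun p => Complex.exp (Complex.I * ω * ψ p) with hE
  set Φ : ℝ → ℂ := fun p => Complex.I * ω * ((deriv ψ p : ℝ) : ℂ) with hΦ
  set Φ' : ℝ → ℂ := fun p => Complex.I * ω * ((deriv (deriv ψ) p : ℝ) : ℂ) with hΦ'
  have hIω : (Complex.I * ω) ≠ 0 :=
    mul_ne_zero Complex.I_ne_zero (by exact_mod_cast ne_of_gt hω)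
  have hnΦ : ∀ x : ℝ, ‖Complex.I * (ω:ℂ) * (x:ℂ)‖ = ω * |x| := by
    intro x
    rw [norm_mul, norm_mul, Complex.norm_I, Complex.norm_real, Complex.norm_real,
      one_mul, Real.norm_eq_abs, Real.norm_eq_abs, abs_of_pos hω]
  have hψ'ne : ∀ p ∈ Icc c d, deriv ψ p ≠ 0 := by
    intro p hp h0
    have := hψ'lb p hp; rw [h0, abs_zero] at this; linarith
  have hΦne : ∀ p ∈ Icc c d, Φ p ≠ 0 := fun p hp =>
    mul_ne_zero hIω (Complex.ofReal_ne_zero.2 (hψ'ne p hp))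
  have hΦlb : ∀ p ∈ Icc c d, ω * m' ≤ ‖Φ p‖ := by
    intro p hp
    rw [hΦ]; simp only []
    rw [hnΦ]
    exact mul_le_mul_of_nonneg_left (hψ'lb p hp) hω.le
  have hψcS : ContinuousOn ψ S := fun p hp => (hψd p hp).continuousAt.continuousWithinAt
  have hEc : ContinuousOn E (Icc c d) := by
    apply Complex.continuous_exp.comp_continuousOn
    exact (continuous_const.continuousOn.mul
      (Complex.continuous_ofReal.comp_continuousOn (hψcS.mono hsub)))
  have hE1 : ∀ p : ℝ, ‖E p‖ = 1 := by
    intro p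
    rw [hE]; simp only []
    rw [Complex.norm_exp]
    have : (Complex.I * ω * ((ψ p : ℝ) : ℂ)).re = 0 := by
      simp [Complex.mul_re, Complex.mul_im]
    rw [this, Real.exp_zero]
  have hΦc : ContinuousOn Φ (Icc c d) :=
    continuous_const.continuousOn.mul
      (Complex.continuous_ofReal.comp_continuousOn ((hψ'c.mono hsub)))
  have hΦ'c : ContinuousOn Φ' (Icc c d) :=
    continuous_const.continuousOn.mul
      (Complex.continuous_ofReal.comp_continuousOn ((hψ''c.mono hsub)))
  have hEd : ∀ p ∈ S, HasDerivAt E (Φ p * E p) p := by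
    intro p hp
    have h1 : HasDerivAt (fun q : ℝ => Complex.I * ω * ((ψ q : ℝ) : ℂ))
        (Complex.I * ω * ((deriv ψ p : ℝ) : ℂ)) p :=
      ((hψd p hp).hasDerivAt.ofReal_comp).const_mul _
    have h2 := h1.cexp
    convert h2 using 1
    rw [mul_comm]
  have hΦd : ∀ p ∈ S, HasDerivAt Φ (Φ' p) p := fun p hp =>
    ((hψ'd p hp).hasDerivAt.ofReal_comp).const_mul _
  -- the integrand pieces
  set t1 : ℝ → ℂ := fun p => U' p / Φ p * E p with ht1
  set t2 : ℝ → ℂ := fun p => U p * Φ' p / Φ p ^ 2 * E p with ht2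
  set F : ℝ → ℂ := fun p => U p / Φ p * E p with hFdef
  have hFc : ContinuousOn F (Icc c d) := ((hUc.div hΦc hΦne).mul hEc)
  have hFd : ∀ p ∈ Ioo c d, HasDerivAt F (t1 p - t2 p + U p * E p) p := by
    intro p hp
    have hpI : p ∈ Icc c d := Ioo_subset_Icc_self hp
    have hpS : p ∈ S := hsub hpI
    have hne := hΦne p hpI
    have hdiv : HasDerivAt (fun q => U q / Φ q)
        ((U' p * Φ p - U p * Φ' p) / Φ p ^ 2) p :=
      (hUd p hp).div (hΦd p hpS) hne
    have := hdiv.mul (hEd p hpS)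
    refine this.congr_deriv ?_
    rw [ht1, ht2]; simp only []
    field_simp
  have huIcc : uIcc c d = Icc c d := uIcc_of_le hcd
  have hUEi : IntervalIntegrable (fun p => U p * E p) volume c d :=
    ((hUc.mul hEc).mono (by rw [huIcc])).intervalIntegrable
  have ht1i : IntervalIntegrable t1 volume c d := by
    have : IntervalIntegrable (fun p => U' p * (E p / Φ p)) volume c d :=
      hU'i.mul_continuousOn (by rw [huIcc]; exact hEc.div hΦc hΦne)
    apply this.congr
    intro p _; rw [ht1]; simp only []; ring
  have ht2i : IntervalIntegrable t2 volume c d :=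
    ((((hUc.mul hΦ'c).div (hΦc.pow 2)
        (fun p hp => pow_ne_zero 2 (hΦne p hp))).mul hEc).mono
      (by rw [huIcc])).intervalIntegrable
  have hgi : IntervalIntegrable (fun p => t1 p - t2 p + U p * E p) volume c d :=
    (ht1i.sub ht2i).add hUEi
  have hFTC : ∫ p in c..d, (t1 p - t2 p + U p * E p) = F d - F c := by
    apply integral_eq_sub_of_hasDeriv_right_of_le hcd hFc
      (fun x hx => (hFd x hx).hasDerivWithinAt) hgi
  have hsplit : ∫ p in c..d, U p * E p
      = F d - F c - ∫ p in c..d, (t1 p - t2 p) := by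
    rw [← hFTC, integral_add (ht1i.sub ht2i) hUEi]
    ring
  have hCU0 : 0 ≤ CU := le_trans (norm_nonneg _) (hCU c ⟨le_rfl, hcd⟩)
  have hFb : ∀ p ∈ Icc c d, ‖F p‖ ≤ ‖U p‖ * (ω * m')⁻¹ := by
    intro p hp
    rw [hFdef]; simp only []
    rw [norm_mul, hE1, mul_one, norm_div, div_eq_mul_inv]
    have h1 : ‖Φ p‖⁻¹ ≤ (ω * m')⁻¹ := inv_anti₀ hωm' (hΦlb p hp)
    exact mul_le_mul_of_nonneg_left h1 (norm_nonneg _)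
  set B : ℝ → ℝ := fun p => (ω * m')⁻¹ * ‖U' p‖ +
      (CU / ω) * (|deriv (deriv ψ) p| / (deriv ψ p) ^ 2) with hB
  have hpt : ∀ p ∈ Icc c d, ‖t1 p - t2 p‖ ≤ B p := by
    intro p hp
    have hψ'2 : (0:ℝ) < (deriv ψ p) ^ 2 := by
      have := hψ'ne p hp; positivity
    refine (norm_sub_le _ _).trans ?_
    have h1 : ‖t1 p‖ ≤ (ω * m')⁻¹ * ‖U' p‖ := by
      rw [ht1]; simp only []
      rw [norm_mul, hE1, mul_one, norm_div, div_eq_mul_inv, mul_comm]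
      exact mul_le_mul_of_nonneg_right (inv_anti₀ hωm' (hΦlb p hp)) (norm_nonneg _)
    have h2 : ‖t2 p‖ ≤ (CU / ω) * (|deriv (deriv ψ) p| / (deriv ψ p) ^ 2) := by
      have e1 : ‖t2 p‖ = ‖U p‖ * (ω * |deriv (deriv ψ) p|) / (ω ^ 2 * (deriv ψ p) ^ 2) := by
        rw [ht2]; simp only []
        rw [norm_mul, hE1, mul_one, norm_div, norm_mul, norm_pow, hnΦ, hΦ]
        simp only []
        rw [hnΦ, mul_pow, sq_abs]
      rw [e1]
      have h3 : ‖U p‖ * (ω * |deriv (deriv ψ) p|) / (ω ^ 2 * (deriv ψ p) ^ 2)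
          ≤ CU * (ω * |deriv (deriv ψ) p|) / (ω ^ 2 * (deriv ψ p) ^ 2) := by
        gcongr
        exact hCU p hp
      refine h3.trans (le_of_eq ?_)
      field_simp
    rw [hB]; simp only []
    linarith
  have hBi1 : IntervalIntegrable (fun p => (ω * m')⁻¹ * ‖U' p‖) volume c d :=
    (hU'i.norm).const_mul _
  have hq : ContinuousOn (fun p => (CU / ω) * (|deriv (deriv ψ) p| / (deriv ψ p) ^ 2))
      (Icc c d) :=
    continuousOn_const.mul (((hψ''c.mono hsub).abs).div ((hψ'c.mono hsub).pow 2)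
      (fun p hp => pow_ne_zero 2 (hψ'ne p hp)))
  have hBi2 : IntervalIntegrable
      (fun p => (CU / ω) * (|deriv (deriv ψ) p| / (deriv ψ p) ^ 2)) volume c d :=
    (hq.mono (by rw [huIcc])).intervalIntegrable
  have hBi : IntervalIntegrable B volume c d := hBi1.add hBi2
  have hint1 : ‖∫ p in c..d, (t1 p - t2 p)‖ ≤ ∫ p in c..d, B p := by
    have hBnn : 0 ≤ ∫ p in c..d, B p := by
      apply intervalIntegral.integral_nonneg hcd
      intro x _
      rw [hB]; simp only []
      positivity
    have h := intervalIntegral.norm_integral_le_abs_of_norm_le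
      (f := fun p => t1 p - t2 p) (g := B) (μ := volume) (a := c) (b := d) ?_ hBi
    · rwa [abs_of_nonneg hBnn] at h
    · filter_upwards [ae_restrict_mem measurableSet_uIoc] with x hx
      refine hpt x ?_
      rw [uIoc_of_le hcd] at hx
      exact Ioc_subset_Icc_self hx
  have hBint : ∫ p in c..d, B p = (ω * m')⁻¹ * (∫ p in c..d, ‖U' p‖) +
      (CU / ω) * ∫ p in c..d, |deriv (deriv ψ) p| / (deriv ψ p) ^ 2 := by
    rw [hB]
    rw [integral_add hBi1 hBi2, intervalIntegral.integral_const_mul,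
      intervalIntegral.integral_const_mul]
  have hψ2b : ∫ p in c..d, |deriv (deriv ψ) p| / (deriv ψ p) ^ 2 ≤ m'⁻¹ :=
    psi2_integral_bound hcd hm' (hψ'c.mono hsub) (fun p hp => hψ'd p (hsub hp))
      (hψ''c.mono hsub) hsign hψ'lb
  have hlast : (CU / ω) * (∫ p in c..d, |deriv (deriv ψ) p| / (deriv ψ p) ^ 2)
      ≤ (ω * m')⁻¹ * CU := by
    have : (CU / ω) * m'⁻¹ = (ω * m')⁻¹ * CU := by
      rw [mul_inv]; ring
    rw [← this]
    exact mul_le_mul_of_nonneg_left hψ2b (by positivity)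
  have hU'n : 0 ≤ ∫ p in c..d, ‖U' p‖ :=
    intervalIntegral.integral_nonneg hcd (fun x _ => norm_nonneg _)
  have hK : (0:ℝ) ≤ (ω * m')⁻¹ := le_of_lt (inv_pos.2 hωm')
  have htri : ‖∫ p in c..d, U p * E p‖ ≤
      ‖F d‖ + ‖F c‖ + ‖∫ p in c..d, (t1 p - t2 p)‖ := by
    rw [hsplit]
    refine (norm_sub_le _ _).trans ?_
    have := norm_sub_le (F d) (F c)
    linarith
  have hFdb := hFb d ⟨hcd, le_rfl⟩
  have hFcb := hFb c ⟨le_rfl, hcd⟩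
  have h1 := hint1
  rw [hBint] at h1
  calc ‖∫ p in c..d, U p * E p‖
      ≤ ‖F d‖ + ‖F c‖ + ‖∫ p in c..d, (t1 p - t2 p)‖ := htri
    _ ≤ (ω * m')⁻¹ * (‖U c‖ + ‖U d‖ + CU + ∫ p in c..d, ‖U' p‖) := by
        nlinarith [hlast, h1, hFdb, hFcb]
end OSC


lemma hasDerivAt_rpow_shift {p₁ e q : ℝ} (h : 0 < q - p₁) :
    HasDerivAt (fun x : ℝ => (x - p₁) ^ e) (e * (q - p₁) ^ (e - 1)) q := by
  have h1 := Real.hasDerivAt_rpow_const (x := q - p₁) (p := e) (Or.inl (ne_of_gt h))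
  have h2 : HasDerivAt (fun x : ℝ => x - p₁) 1 q := (hasDerivAt_id q).sub_const p₁
  have := h1.comp q h2
  rw [mul_one] at this
  exact this

lemma osc_piece (ρ μ a b p₁ p₂ p₀ ω δ m M V c d : ℝ) (ψ ψt : ℝ → ℝ) (ut : ℝ → ℂ)
    (S : Set ℝ)
    (hρ : 1 < ρ) (hμ0 : 0 < μ) (hμ1 : μ ≤ 1) (hω : 0 < ω) (hδ : 0 < δ)
    (hI : Icc p₁ p₂ ⊆ Ioo a b)
    (hψ1 : ContDiffOn ℝ 1 ψ (Ioo a b))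
    (hψ2 : ContDiffOn ℝ 2 ψ (Ioo a b \ {p₀}))
    (hfact : ∀ p ∈ Ioo a b, deriv ψ p = |p - p₀| ^ (ρ - 1) * ψt p)
    (hSo : IsOpen S) (hSsub : S ⊆ Ioo a b \ {p₀}) (hsubS : Icc c d ⊆ S)
    (hmono : MonotoneOn (deriv ψ) S ∨ AntitoneOn (deriv ψ) S)
    (hm : ∀ p ∈ Icc p₁ p₂, m ≤ |ψt p|) (hm0 : 0 < m)
    (hM : ∀ p ∈ Icc p₁ p₂, ‖ut p‖ ≤ M) (hM0 : 0 ≤ M)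
    (hVb : ∫ p in c..d, ‖deriv ut p‖ ≤ V)
    (hutc : ContinuousOn ut (Icc p₁ p₂))
    (hutd : ∀ p ∈ Ioo p₁ p₂, DifferentiableAt ℝ ut p)
    (hutint : IntervalIntegrable (deriv ut) volume p₁ p₂)
    (hc : p₁ + δ ≤ c) (hcd : c ≤ d) (hd2 : d ≤ p₂)
    (hdist : ∀ p ∈ Icc c d, δ ≤ |p - p₀|) :
    ‖∫ p in c..d, (((p - p₁) ^ (μ - 1) : ℝ) : ℂ) * ut p *
        Complex.exp (Complex.I * ω * ψ p)‖ ≤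
      (ω * (δ ^ (ρ - 1) * m))⁻¹ * (4 * (δ ^ (μ - 1) * M) + δ ^ (μ - 1) * V) := by
  have hIccsub : Icc c d ⊆ Icc p₁ p₂ := fun p hp => ⟨by linarith [hp.1], le_trans hp.2 hd2⟩
  have hIoosub : Ioo c d ⊆ Ioo p₁ p₂ := fun p hp => ⟨by linarith [hp.1], lt_of_lt_of_le hp.2 hd2⟩
  have hOo : IsOpen (Ioo a b \ {p₀}) := isOpen_Ioo.sdiff isClosed_singleton
  have hder2 : ContDiffOn ℝ 1 (deriv ψ) (Ioo a b \ {p₀}) :=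
    hψ2.deriv_of_isOpen hOo (by norm_num)
  have hψd : ∀ p ∈ S, DifferentiableAt ℝ ψ p := fun p hp =>
    (hψ1.differentiableOn one_ne_zero).differentiableAt (isOpen_Ioo.mem_nhds (hSsub hp).1)
  have hψ'c : ContinuousOn (deriv ψ) S :=
    (hψ1.continuousOn_deriv_of_isOpen isOpen_Ioo le_rfl).mono (fun p hp => (hSsub hp).1)
  have hψ'd : ∀ p ∈ S, DifferentiableAt ℝ (deriv ψ) p := fun p hp =>
    (hder2.differentiableOn one_ne_zero).differentiableAt (hOo.mem_nhds (hSsub hp))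
  have hψ''c : ContinuousOn (deriv (deriv ψ)) S :=
    (hder2.continuousOn_deriv_of_isOpen hOo le_rfl).mono hSsub
  have hsign : (∀ p ∈ Ioo c d, 0 ≤ deriv (deriv ψ) p) ∨
      (∀ p ∈ Ioo c d, deriv (deriv ψ) p ≤ 0) := by
    rcases hmono with hmo | hmo
    · exact Or.inl fun p hp => deriv_nonneg_of_monotoneOn hSo hmo
        (hsubS (Ioo_subset_Icc_self hp)) (hψ'd p (hsubS (Ioo_subset_Icc_self hp)))
    · exact Or.inr fun p hp => deriv_nonpos_of_antitoneOn hSo hmo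
        (hsubS (Ioo_subset_Icc_self hp)) (hψ'd p (hsubS (Ioo_subset_Icc_self hp)))
  have hm' : 0 < δ ^ (ρ - 1) * m := mul_pos (Real.rpow_pos_of_pos hδ _) hm0
  have hψ'lb : ∀ p ∈ Icc c d, δ ^ (ρ - 1) * m ≤ |deriv ψ p| := by
    intro p hp
    have hpI : p ∈ Icc p₁ p₂ := hIccsub hp
    have hpab : p ∈ Ioo a b := hI hpI
    rw [hfact p hpab, abs_mul, abs_of_nonneg (Real.rpow_nonneg (abs_nonneg _) _)]
    exact mul_le_mul (Real.rpow_le_rpow hδ.le (hdist p hp) (by linarith)) (hm p hpI)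
      hm0.le (Real.rpow_nonneg (abs_nonneg _) _)
  -- amplitude
  set G : ℝ → ℂ := fun q => (((q - p₁) ^ (μ - 1) : ℝ) : ℂ) * ut q with hG
  set G' : ℝ → ℂ := fun q => (((μ - 1) * (q - p₁) ^ (μ - 2) : ℝ) : ℂ) * ut q +
      (((q - p₁) ^ (μ - 1) : ℝ) : ℂ) * deriv ut q with hG'
  have hqpos : ∀ q ∈ Icc c d, 0 < q - p₁ := fun q hq => by linarith [hq.1]
  have hqδ : ∀ q ∈ Icc c d, δ ≤ q - p₁ := fun q hq => by linarith [hq.1]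
  have hrc1 : ContinuousOn (fun q : ℝ => (q - p₁) ^ (μ - 1)) (Icc c d) :=
    ContinuousOn.rpow_const ((continuous_id.sub continuous_const).continuousOn)
      (fun q hq => Or.inl (ne_of_gt (hqpos q hq)))
  have hrc2 : ContinuousOn (fun q : ℝ => (μ - 1) * (q - p₁) ^ (μ - 2)) (Icc c d) :=
    continuousOn_const.mul (ContinuousOn.rpow_const
      ((continuous_id.sub continuous_const).continuousOn)
      (fun q hq => Or.inl (ne_of_gt (hqpos q hq))))
  have hutcd : ContinuousOn ut (Icc c d) := hutc.mono hIccsub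
  have hGc : ContinuousOn G (Icc c d) :=
    (Complex.continuous_ofReal.comp_continuousOn hrc1).mul hutcd
  have hGd : ∀ p ∈ Ioo c d, HasDerivAt G (G' p) p := by
    intro p hp
    have hpo : p ∈ Icc c d := Ioo_subset_Icc_self hp
    have h1 : HasDerivAt (fun x : ℝ => (x - p₁) ^ (μ - 1))
        ((μ - 1) * (p - p₁) ^ (μ - 2)) p := by
      have := hasDerivAt_rpow_shift (p₁ := p₁) (e := μ - 1) (q := p) (hqpos p hpo)
      convert this using 2
      ring
    exact (h1.ofReal_comp).mul ((hutd p (hIoosub hp)).hasDerivAt)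
  have hG'i : IntervalIntegrable G' volume c d := by
    apply IntervalIntegrable.add
    · exact (((Complex.continuous_ofReal.comp_continuousOn hrc2).mul hutcd).mono
        (by rw [uIcc_of_le hcd])).intervalIntegrable
    · have hd1 : IntervalIntegrable (deriv ut) volume c d := by
        apply hutint.mono_set
        rw [uIcc_of_le hcd, uIcc_of_le (by linarith : p₁ ≤ p₂)]
        exact hIccsub
      exact hd1.continuousOn_mul
        (by rw [uIcc_of_le hcd]; exact Complex.continuous_ofReal.comp_continuousOn hrc1)
  have hrpb : ∀ q ∈ Icc c d, (q - p₁) ^ (μ - 1) ≤ δ ^ (μ - 1) := fun q hq =>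
    Real.rpow_le_rpow_of_nonpos hδ (hqδ q hq) (by linarith)
  have hCUb : ∀ q ∈ Icc c d, ‖G q‖ ≤ δ ^ (μ - 1) * M := by
    intro q hq
    rw [hG]; simp only []
    rw [norm_mul, Complex.norm_real, Real.norm_eq_abs,
      abs_of_nonneg (Real.rpow_nonneg (hqpos q hq).le _)]
    exact mul_le_mul (hrpb q hq) (hM q (hIccsub hq)) (norm_nonneg _)
      (Real.rpow_nonneg hδ.le _)
  have hmain := osc_bound_s8 hω hcd hm' hSo hsubS hψd hψ'c hψ'd hψ''c hsign hψ'lb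
    hGc hGd hG'i hCUb
  -- now bound the terms
  have hδμ0 : (0:ℝ) ≤ δ ^ (μ - 1) := Real.rpow_nonneg hδ.le _
  have hK0 : (0:ℝ) ≤ (ω * (δ ^ (ρ - 1) * m))⁻¹ := by positivity
  have hGcb : ‖G c‖ ≤ δ ^ (μ - 1) * M := hCUb c ⟨le_rfl, hcd⟩
  have hGdb : ‖G d‖ ≤ δ ^ (μ - 1) * M := hCUb d ⟨hcd, le_rfl⟩
  -- integral of ‖G'‖
  have hAderiv : ∀ q ∈ uIcc c d,
      HasDerivAt (fun x : ℝ => -(x - p₁) ^ (μ - 1) * M)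
        ((1 - μ) * (q - p₁) ^ (μ - 2) * M) q := by
    intro q hq
    rw [uIcc_of_le hcd] at hq
    have := ((hasDerivAt_rpow_shift (p₁ := p₁) (e := μ - 1) (q := q)
      (hqpos q hq)).neg).mul_const M
    refine this.congr_deriv ?_
    have : μ - 1 - 1 = μ - 2 := by ring
    rw [this]
    ring
  have hAi : IntervalIntegrable (fun q => (1 - μ) * (q - p₁) ^ (μ - 2) * M) volume c d := by
    apply ContinuousOn.intervalIntegrable
    rw [uIcc_of_le hcd]
    exact (continuousOn_const.mul (ContinuousOn.rpow_const
      ((continuous_id.sub continuous_const).continuousOn)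
      (fun q hq => Or.inl (ne_of_gt (hqpos q hq))))).mul continuousOn_const
  have hintA : ∫ q in c..d, (1 - μ) * (q - p₁) ^ (μ - 2) * M ≤ δ ^ (μ - 1) * M := by
    rw [intervalIntegral.integral_eq_sub_of_hasDerivAt hAderiv hAi]
    have h1 : (c - p₁) ^ (μ - 1) ≤ δ ^ (μ - 1) := hrpb c ⟨le_rfl, hcd⟩
    have h2 : (0:ℝ) ≤ (d - p₁) ^ (μ - 1) := Real.rpow_nonneg (hqpos d ⟨hcd, le_rfl⟩).le _
    nlinarith
  have hG'n : ∀ q ∈ Icc c d, ‖G' q‖ ≤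
      (1 - μ) * (q - p₁) ^ (μ - 2) * M + δ ^ (μ - 1) * ‖deriv ut q‖ := by
    intro q hq
    rw [hG']; simp only []
    refine (norm_add_le _ _).trans ?_
    have hb1 : ‖(((μ - 1) * (q - p₁) ^ (μ - 2) : ℝ) : ℂ) * ut q‖ ≤
        (1 - μ) * (q - p₁) ^ (μ - 2) * M := by
      rw [norm_mul, Complex.norm_real, Real.norm_eq_abs, abs_mul,
        abs_of_nonpos (by linarith : μ - 1 ≤ 0),
        abs_of_nonneg (Real.rpow_nonneg (hqpos q hq).le _)]
      have : -(μ - 1) = 1 - μ := by ring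
      rw [this]
      exact mul_le_mul_of_nonneg_left (hM q (hIccsub hq))
        (mul_nonneg (by linarith) (Real.rpow_nonneg (hqpos q hq).le _))
    have hb2 : ‖(((q - p₁) ^ (μ - 1) : ℝ) : ℂ) * deriv ut q‖ ≤
        δ ^ (μ - 1) * ‖deriv ut q‖ := by
      rw [norm_mul, Complex.norm_real, Real.norm_eq_abs,
        abs_of_nonneg (Real.rpow_nonneg (hqpos q hq).le _)]
      exact mul_le_mul_of_nonneg_right (hrpb q hq) (norm_nonneg _)
    linarith
  have hG'int : ∫ q in c..d, ‖G' q‖ ≤ δ ^ (μ - 1) * M + δ ^ (μ - 1) * V := by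
    have hBi : IntervalIntegrable
        (fun q => (1 - μ) * (q - p₁) ^ (μ - 2) * M + δ ^ (μ - 1) * ‖deriv ut q‖)
        volume c d := by
      apply hAi.add
      apply IntervalIntegrable.const_mul
      apply IntervalIntegrable.norm
      apply hutint.mono_set
      rw [uIcc_of_le hcd, uIcc_of_le (by linarith : p₁ ≤ p₂)]
      exact hIccsub
    have h1 : ∫ q in c..d, ‖G' q‖ ≤
        ∫ q in c..d, ((1 - μ) * (q - p₁) ^ (μ - 2) * M + δ ^ (μ - 1) * ‖deriv ut q‖) := by
      apply intervalIntegral.integral_mono_on hcd hG'i.norm hBi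
      exact fun x hx => hG'n x hx
    refine h1.trans ?_
    rw [intervalIntegral.integral_add hAi (by
      apply IntervalIntegrable.const_mul
      apply IntervalIntegrable.norm
      apply hutint.mono_set
      rw [uIcc_of_le hcd, uIcc_of_le (by linarith : p₁ ≤ p₂)]
      exact hIccsub), intervalIntegral.integral_const_mul]
    have h2 : δ ^ (μ - 1) * ∫ q in c..d, ‖deriv ut q‖ ≤ δ ^ (μ - 1) * V :=
      mul_le_mul_of_nonneg_left hVb hδμ0
    linarith
  refine hmain.trans ?_
  apply mul_le_mul_of_nonneg_left ?_ hK0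
  linarith

set_option maxHeartbeats 1000000 in
/-- Extension of the van der Corput Lemma: phase with a stationary point `p₀`
of order `ρ - 1` (anywhere in the open interval `I = (a,b) ⊇ [p₁,p₂]`) and
amplitude with an integrable singular point of strength `μ - 1` at `p₁`. -/
theorem stmt_8 (ρ μ a b p₁ p₂ p₀ : ℝ) (hρ : 1 < ρ) (hμ : μ ∈ Set.Ioc (0:ℝ) 1)
    (hI : Set.Icc p₁ p₂ ⊆ Set.Ioo a b) (hp : p₁ < p₂) (hp₀ : p₀ ∈ Set.Icc p₁ p₂)
    (ψ ψt : ℝ → ℝ)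
    (hψ1 : ContDiffOn ℝ 1 ψ (Set.Ioo a b))
    (hψ2 : ContDiffOn ℝ 2 ψ (Set.Ioo a b \ {p₀}))
    (hfact : ∀ p ∈ Set.Ioo a b, deriv ψ p = |p - p₀| ^ (ρ - 1) * ψt p)
    (hψtc : ContinuousOn (fun p => |ψt p|) (Set.Ioo a b))
    (hψt0 : ∀ p ∈ Set.Ioo a b, ψt p ≠ 0)
    (hmono₁ : MonotoneOn (deriv ψ) {p ∈ Set.Ioo a b | p < p₀} ∨
      AntitoneOn (deriv ψ) {p ∈ Set.Ioo a b | p < p₀})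
    (hmono₂ : MonotoneOn (deriv ψ) {p ∈ Set.Ioo a b | p₀ < p} ∨
      AntitoneOn (deriv ψ) {p ∈ Set.Ioo a b | p₀ < p})
    (U ut : ℝ → ℂ)
    (hU : ∀ p ∈ Set.Ioc p₁ p₂, U p = ((p - p₁) ^ (μ - 1) : ℝ) * ut p)
    (hutc : ContinuousOn ut (Set.Icc p₁ p₂))
    (hutd : ∀ p ∈ Set.Ioo p₁ p₂, DifferentiableAt ℝ ut p)
    (hutint : IntervalIntegrable (deriv ut) volume p₁ p₂)
    (hut0 : μ ≠ 1 → ut p₁ ≠ 0) :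
    ∀ ω : ℝ, 0 < ω →
      ‖∫ p in p₁..p₂, U p * Complex.exp (Complex.I * ω * ψ p)‖ ≤
        ((3 / μ) * (⨆ p : Set.Icc p₁ p₂, ‖ut p‖) +
          (8 * (⨆ p : Set.Icc p₁ p₂, ‖ut p‖) +
            2 * ∫ p in p₁..p₂, ‖deriv ut p‖) *
          (⨅ p : Set.Icc p₁ p₂, |ψt p|)⁻¹) * ω ^ (-(μ / ρ)) := by
  intro ω hω
  have hμ0 : 0 < μ := hμ.1
  have hμ1 : μ ≤ 1 := hμ.2
  have hρ0 : (0:ℝ) < ρ := by linarith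
  have hp12 : p₁ ≤ p₂ := hp.le
  set M : ℝ := ⨆ p : Set.Icc p₁ p₂, ‖ut p‖ with hMdef
  set V : ℝ := ∫ p in p₁..p₂, ‖deriv ut p‖ with hVdef
  set m : ℝ := ⨅ p : Set.Icc p₁ p₂, |ψt p| with hmdef
  set δ : ℝ := ω ^ (-1/ρ) with hδdef
  have hδ : 0 < δ := Real.rpow_pos_of_pos hω _
  -- sup facts
  have hbddM : BddAbove (Set.range fun p : Set.Icc p₁ p₂ => ‖ut p‖) := by
    obtain ⟨C, hC⟩ := isCompact_Icc.exists_bound_of_continuousOn hutc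
    exact ⟨C, by rintro x ⟨p, rfl⟩; exact hC p p.2⟩
  have hM : ∀ p ∈ Set.Icc p₁ p₂, ‖ut p‖ ≤ M := fun p hp' =>
    le_ciSup hbddM (⟨p, hp'⟩ : Set.Icc p₁ p₂)
  have hM0 : 0 ≤ M := le_trans (norm_nonneg _) (hM p₁ ⟨le_rfl, hp12⟩)
  -- inf facts
  have hnemp : (Set.Icc p₁ p₂).Nonempty := ⟨p₁, le_rfl, hp12⟩
  haveI : Nonempty (Set.Icc p₁ p₂) := ⟨⟨p₁, le_rfl, hp12⟩⟩
  have hψtcI : ContinuousOn (fun p => |ψt p|) (Set.Icc p₁ p₂) := hψtc.mono hI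
  obtain ⟨q0, hq0, hq0min⟩ := isCompact_Icc.exists_isMinOn hnemp hψtcI
  have hm : ∀ p ∈ Set.Icc p₁ p₂, m ≤ |ψt p| := fun p hp' =>
    ciInf_le ⟨0, by rintro x ⟨r, rfl⟩; exact abs_nonneg _⟩ (⟨p, hp'⟩ : Set.Icc p₁ p₂)
  have hm0 : 0 < m := by
    have h1 : |ψt q0| ≤ m := le_ciInf fun r => isMinOn_iff.1 hq0min r r.2
    have h2 : 0 < |ψt q0| := abs_pos.2 (hψt0 q0 (hI hq0))
    linarith
  -- V facts
  have hV0 : 0 ≤ V := intervalIntegral.integral_nonneg hp12 (fun x _ => norm_nonneg _)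
  have hVsub : ∀ c' d', p₁ ≤ c' → c' ≤ d' → d' ≤ p₂ →
      ∫ p in c'..d', ‖deriv ut p‖ ≤ V := by
    intro c' d' h1 h2 h3
    exact intervalIntegral.integral_mono_interval h1 h2 h3
      (ae_of_all _ fun x => norm_nonneg _) hutint.norm
  -- integrand
  set E : ℝ → ℂ := fun p => Complex.exp (Complex.I * ω * ψ p) with hEdef
  have hEc : ContinuousOn E (Set.Icc p₁ p₂) := by
    apply Complex.continuous_exp.comp_continuousOn
    apply continuous_const.continuousOn.mul
    exact Complex.continuous_ofReal.comp_continuousOn (hψ1.continuousOn.mono hI)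
  have hE1 : ∀ p : ℝ, ‖E p‖ = 1 := by
    intro p
    rw [hEdef]; simp only []
    rw [Complex.norm_exp]
    have : (Complex.I * ω * (ψ p : ℂ)).re = 0 := by
      simp [Complex.mul_re, Complex.mul_im]
    rw [this, Real.exp_zero]
  have hri : IntervalIntegrable (fun p : ℝ => (p - p₁) ^ (μ - 1)) volume p₁ p₂ := by
    have h0 := intervalIntegrable_rpow' (a := 0) (b := p₂ - p₁) (r := μ - 1)
      (by linarith)
    have h1 := h0.comp_sub_right p₁
    simpa using h1
  have hric : IntervalIntegrable (fun p : ℝ => (((p - p₁) ^ (μ - 1) : ℝ) : ℂ))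
      volume p₁ p₂ := ⟨hri.1.ofReal, hri.2.ofReal⟩
  have hFFi : IntervalIntegrable (fun p => U p * E p) volume p₁ p₂ := by
    have hGGi : IntervalIntegrable
        (fun p => (((p - p₁) ^ (μ - 1) : ℝ) : ℂ) * (ut p * E p)) volume p₁ p₂ :=
      hric.mul_continuousOn (by rw [uIcc_of_le hp12]; exact hutc.mul hEc)
    apply hGGi.congr
    intro x hx; simp only []
    rw [uIoc_of_le hp12] at hx
    rw [hU x hx]
    ring
  -- split points
  set s : ℝ := min (p₁ + δ) p₂ with hsdef
  set u : ℝ := max s (p₀ - δ) with hudef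
  set v : ℝ := max u (min (p₀ + δ) p₂) with hvdef
  have hp₀1 : p₁ ≤ p₀ := hp₀.1
  have hp₀2 : p₀ ≤ p₂ := hp₀.2
  have hps : p₁ ≤ s := le_min (by linarith) hp12
  have hsu : s ≤ u := le_max_left _ _
  have huv : u ≤ v := le_max_left _ _
  have hsp2 : s ≤ p₂ := min_le_right _ _
  have hup2 : u ≤ p₂ := max_le hsp2 (by linarith)
  have hvp2 : v ≤ p₂ := max_le hup2 (min_le_right _ _)
  have hu_le : u ≤ p₀ + δ := max_le (le_trans (min_le_left _ _) (by linarith)) (by linarith)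
  have hv_le : v ≤ p₀ + δ := max_le hu_le (min_le_left _ _)
  have hu_ge : p₀ - δ ≤ u := le_max_right _ _
  -- splitting
  have hsub1 : IntervalIntegrable (fun p => U p * E p) volume p₁ s :=
    hFFi.mono_set (by rw [uIcc_of_le hps, uIcc_of_le hp12]; exact Icc_subset_Icc le_rfl hsp2)
  have hsub2 : IntervalIntegrable (fun p => U p * E p) volume s u :=
    hFFi.mono_set (by rw [uIcc_of_le hsu, uIcc_of_le hp12]; exact Icc_subset_Icc hps hup2)
  have hsub3 : IntervalIntegrable (fun p => U p * E p) volume u v :=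
    hFFi.mono_set (by
      rw [uIcc_of_le huv, uIcc_of_le hp12]
      exact Icc_subset_Icc (le_trans hps hsu) hvp2)
  have hsub4 : IntervalIntegrable (fun p => U p * E p) volume v p₂ :=
    hFFi.mono_set (by
      rw [uIcc_of_le hvp2, uIcc_of_le hp12]
      exact Icc_subset_Icc (le_trans hps (le_trans hsu huv)) le_rfl)
  have hsplit : ∫ p in p₁..p₂, U p * E p =
      (∫ p in p₁..s, U p * E p) + (∫ p in s..u, U p * E p) +
      (∫ p in u..v, U p * E p) + (∫ p in v..p₂, U p * E p) := by
    rw [integral_add_adjacent_intervals hsub1 hsub2,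
      integral_add_adjacent_intervals (hsub1.trans hsub2) hsub3,
      integral_add_adjacent_intervals ((hsub1.trans hsub2).trans hsub3) hsub4]
  have hδμsplit : δ ^ (μ - 1) * δ = δ ^ μ := by
    have h1 : (μ - 1) + 1 = μ := by ring
    calc δ ^ (μ - 1) * δ = δ ^ ((μ - 1) + 1) :=
          (Real.rpow_add_one (ne_of_gt hδ) (μ - 1)).symm
      _ = δ ^ μ := by rw [h1]
  -- Bound 1 : singular part
  have hb1 : ‖∫ p in p₁..s, U p * E p‖ ≤ M * δ ^ μ / μ := by
    have hgi : IntervalIntegrable (fun p : ℝ => (p - p₁) ^ (μ - 1) * M) volume p₁ s :=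
      (hri.mono_set (by
        rw [uIcc_of_le hps, uIcc_of_le hp12]
        exact Icc_subset_Icc le_rfl hsp2)).mul_const M
    have h := intervalIntegral.norm_integral_le_abs_of_norm_le (f := fun p => U p * E p)
        (g := fun p => (p - p₁) ^ (μ - 1) * M) (μ := volume) (a := p₁) (b := s) ?_ hgi
    · refine h.trans ?_
      have hval : ∫ p in p₁..s, (p - p₁) ^ (μ - 1) * M = (s - p₁) ^ μ / μ * M := by
        rw [intervalIntegral.integral_mul_const]
        congr 1
        have h1 : (∫ p in p₁..s, (p - p₁) ^ (μ - 1)) =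
            ∫ x in (p₁ - p₁)..(s - p₁), x ^ (μ - 1) :=
          intervalIntegral.integral_comp_sub_right (fun x => x ^ (μ - 1)) p₁
        rw [h1, sub_self, integral_rpow (Or.inl (by linarith : (-1:ℝ) < μ - 1)),
          show μ - 1 + 1 = μ by ring, Real.zero_rpow (ne_of_gt hμ0)]
        ring
      have hsd : s - p₁ ≤ δ := by
        have := min_le_left (p₁ + δ) p₂
        rw [← hsdef] at this
        linarith
      have h2 : (s - p₁) ^ μ ≤ δ ^ μ :=
        Real.rpow_le_rpow (by linarith) hsd hμ0.le
      have h3 : (0:ℝ) ≤ (s - p₁) ^ μ / μ * M := by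
        have := Real.rpow_nonneg (by linarith : (0:ℝ) ≤ s - p₁) μ
        positivity
      rw [hval, abs_of_nonneg h3, show M * δ ^ μ / μ = δ ^ μ / μ * M by ring]
      gcongr
    · filter_upwards [ae_restrict_mem measurableSet_uIoc] with x hx
      rw [uIoc_of_le hps] at hx
      have hx2 : x ∈ Set.Ioc p₁ p₂ := Ioc_subset_Ioc le_rfl hsp2 hx
      rw [hU x hx2, norm_mul, norm_mul, Complex.norm_real, Real.norm_eq_abs, hE1,
        mul_one, abs_of_nonneg (Real.rpow_nonneg (by linarith [hx.1] : (0:ℝ) ≤ x - p₁) _)]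
      exact mul_le_mul_of_nonneg_left (hM x (Ioc_subset_Icc_self hx2))
        (Real.rpow_nonneg (by linarith [hx.1]) _)
  -- Bound 3 : stationary window
  have hb3 : ‖∫ p in u..v, U p * E p‖ ≤ 2 * M * δ ^ μ := by
    by_cases hcase : p₁ + δ ≤ p₂
    · have hs_eq : s = p₁ + δ := by rw [hsdef]; exact min_eq_left hcase
      have hC : ∀ x ∈ uIoc u v, ‖U x * E x‖ ≤ δ ^ (μ - 1) * M := by
        intro x hx
        rw [uIoc_of_le huv] at hx
        have hxu : u < x := hx.1
        have hsu' : p₁ + δ ≤ u := by rw [← hs_eq]; exact hsu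
        have hx2 : x ∈ Set.Ioc p₁ p₂ := ⟨by linarith, le_trans hx.2 hvp2⟩
        rw [hU x hx2, norm_mul, norm_mul, Complex.norm_real, Real.norm_eq_abs, hE1,
          mul_one, abs_of_nonneg (Real.rpow_nonneg (by linarith : (0:ℝ) ≤ x - p₁) _)]
        exact mul_le_mul (Real.rpow_le_rpow_of_nonpos hδ (by linarith) (by linarith))
          (hM x (Ioc_subset_Icc_self hx2)) (norm_nonneg _) (Real.rpow_nonneg hδ.le _)
      refine (intervalIntegral.norm_integral_le_of_norm_le_const hC).trans ?_
      have hvu : |v - u| ≤ 2 * δ := by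
        rw [abs_of_nonneg (by linarith)]
        linarith
      calc δ ^ (μ - 1) * M * |v - u| ≤ δ ^ (μ - 1) * M * (2 * δ) := by
            apply mul_le_mul_of_nonneg_left hvu
            have := Real.rpow_nonneg hδ.le (μ - 1)
            positivity
        _ = 2 * M * δ ^ μ := by rw [← hδμsplit]; ring
    · have hs_eq : s = p₂ := by rw [hsdef]; exact min_eq_right (by linarith)
      have hu_eq : u = p₂ := by
        rw [hudef, hs_eq]
        exact max_eq_left (by linarith)
      have hv_eq : v = p₂ := by
        rw [hvdef, hu_eq]
        exact max_eq_left (min_le_right _ _)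
      rw [hu_eq, hv_eq, intervalIntegral.integral_same, norm_zero]
      have := Real.rpow_nonneg hδ.le μ
      nlinarith
  -- the oscillatory pieces
  set K : ℝ := (ω * (δ ^ (ρ - 1) * m))⁻¹ * (4 * (δ ^ (μ - 1) * M) + δ ^ (μ - 1) * V)
    with hKdef
  have hK0 : 0 ≤ K := by
    rw [hKdef]
    have h1 : (0:ℝ) ≤ δ ^ (μ - 1) := Real.rpow_nonneg hδ.le _
    have h2 : (0:ℝ) ≤ (ω * (δ ^ (ρ - 1) * m))⁻¹ := by positivity
    apply mul_nonneg h2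
    nlinarith [mul_nonneg h1 hM0, mul_nonneg h1 hV0]
  have hb2 : ‖∫ p in s..u, U p * E p‖ ≤ K := by
    rcases eq_or_lt_of_le hsu with heq | hlt
    · rw [← heq, intervalIntegral.integral_same, norm_zero]; exact hK0
    · have hs_lt_p2 : s < p₂ := lt_of_lt_of_le hlt hup2
      have hs_eq : s = p₁ + δ := by
        rw [hsdef]
        apply min_eq_left
        by_contra hcon
        push_neg at hcon
        have : s = p₂ := by rw [hsdef]; exact min_eq_right (le_of_lt hcon)
        linarith
      have hu_eq : u = p₀ - δ := by
        rw [hudef]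
        apply max_eq_right
        by_contra hcon
        push_neg at hcon
        have : u = s := by rw [hudef]; exact max_eq_left (le_of_lt hcon)
        linarith
      have heqon : EqOn (fun p => U p * E p)
          (fun p => (((p - p₁) ^ (μ - 1) : ℝ) : ℂ) * ut p * E p) (uIcc s u) := by
        intro x hx
        rw [uIcc_of_le hsu] at hx
        have hx2 : x ∈ Set.Ioc p₁ p₂ :=
          ⟨by rw [hs_eq] at hx; linarith [hx.1], le_trans hx.2 hup2⟩
        simp only []
        rw [hU x hx2]
      rw [intervalIntegral.integral_congr heqon]
      refine osc_piece ρ μ a b p₁ p₂ p₀ ω δ m M V s u ψ ψt ut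
        {p ∈ Set.Ioo a b | p < p₀} hρ hμ0 hμ1 hω hδ hI hψ1 hψ2 hfact
        ?_ ?_ ?_ hmono₁ hm hm0 hM hM0 (hVsub s u hps hsu hup2) hutc hutd hutint
        (le_of_eq hs_eq.symm) hsu hup2 ?_
      · exact IsOpen.inter isOpen_Ioo isOpen_Iio
      · rintro x ⟨hx1, hx2⟩
        exact ⟨hx1, fun h => ne_of_lt hx2 h⟩
      · intro x hx
        have hxI : x ∈ Set.Icc p₁ p₂ := by
          constructor
          · rw [hs_eq] at hx; linarith [hx.1]
          · rw [hu_eq] at hx; linarith [hx.2]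
        exact ⟨hI hxI, by rw [hu_eq] at hx; have := hx.2; show x < p₀; linarith⟩
      · intro x hx
        rw [hu_eq] at hx
        rw [abs_sub_comm, abs_of_nonneg (by linarith [hx.2] : (0:ℝ) ≤ p₀ - x)]
        linarith [hx.2]
  have hb4 : ‖∫ p in v..p₂, U p * E p‖ ≤ K := by
    rcases eq_or_lt_of_le hvp2 with heq | hlt
    · rw [heq, intervalIntegral.integral_same, norm_zero]; exact hK0
    · have hv_eq : v = p₀ + δ := by
        have hmin : min (p₀ + δ) p₂ = p₀ + δ := by
          apply min_eq_left
          by_contra hcon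
          push_neg at hcon
          have h1 : min (p₀ + δ) p₂ = p₂ := min_eq_right (le_of_lt hcon)
          have h2 : p₂ ≤ v := by rw [hvdef, h1]; exact le_max_right _ _
          linarith
        rw [hvdef, hmin]
        exact max_eq_right hu_le
      have hv_ge : p₁ + δ ≤ v := by rw [hv_eq]; linarith
      have heqon : EqOn (fun p => U p * E p)
          (fun p => (((p - p₁) ^ (μ - 1) : ℝ) : ℂ) * ut p * E p) (uIcc v p₂) := by
        intro x hx
        rw [uIcc_of_le hvp2] at hx
        have hx2 : x ∈ Set.Ioc p₁ p₂ := ⟨by linarith [hx.1], hx.2⟩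
        simp only []
        rw [hU x hx2]
      rw [intervalIntegral.integral_congr heqon]
      refine osc_piece ρ μ a b p₁ p₂ p₀ ω δ m M V v p₂ ψ ψt ut
        {p ∈ Set.Ioo a b | p₀ < p} hρ hμ0 hμ1 hω hδ hI hψ1 hψ2 hfact
        ?_ ?_ ?_ hmono₂ hm hm0 hM hM0 (hVsub v p₂ (by linarith) hvp2 le_rfl) hutc hutd hutint
        hv_ge hvp2 le_rfl ?_
      · exact IsOpen.inter isOpen_Ioo isOpen_Ioi
      · rintro x ⟨hx1, hx2⟩
        exact ⟨hx1, fun h => ne_of_gt hx2 h⟩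
      · intro x hx
        have hxI : x ∈ Set.Icc p₁ p₂ := ⟨by linarith [hx.1], hx.2⟩
        refine ⟨hI hxI, ?_⟩
        show p₀ < x
        rw [hv_eq] at hx
        linarith [hx.1]
      · intro x hx
        rw [hv_eq] at hx
        rw [abs_of_nonneg (by linarith [hx.1] : (0:ℝ) ≤ x - p₀)]
        linarith [hx.1]
  -- assemble
  have htot : ‖∫ p in p₁..p₂, U p * E p‖ ≤
      M * δ ^ μ / μ + K + 2 * M * δ ^ μ + K := by
    rw [hsplit]
    have t1 := norm_add_le ((∫ p in p₁..s, U p * E p) + (∫ p in s..u, U p * E p) +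
      (∫ p in u..v, U p * E p)) (∫ p in v..p₂, U p * E p)
    have t2 := norm_add_le ((∫ p in p₁..s, U p * E p) + (∫ p in s..u, U p * E p))
      (∫ p in u..v, U p * E p)
    have t3 := norm_add_le (∫ p in p₁..s, U p * E p) (∫ p in s..u, U p * E p)
    linarith
  refine le_trans htot ?_
  -- final arithmetic
  have hδpow : ∀ x : ℝ, δ ^ x = ω ^ (-1/ρ * x) := fun x => by
    rw [hδdef]
    exact (Real.rpow_mul hω.le _ _).symm
  have hδμ : δ ^ μ = ω ^ (-(μ/ρ)) := by
    rw [hδpow]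
    congr 1
    ring
  have hKmul : (ω * (δ ^ (ρ - 1) * m))⁻¹ * δ ^ (μ - 1) = m⁻¹ * ω ^ (-(μ/ρ)) := by
    rw [hδpow (ρ - 1), hδpow (μ - 1), mul_inv, mul_inv,
      ← Real.rpow_neg_one ω, ← Real.rpow_neg hω.le]
    rw [show ω ^ (-1:ℝ) * ((ω ^ (-(-1/ρ * (ρ-1)))) * m⁻¹) * ω ^ (-1/ρ * (μ-1)) =
      (ω ^ (-1:ℝ) * ω ^ (-(-1/ρ * (ρ-1))) * ω ^ (-1/ρ * (μ-1))) * m⁻¹ from by ring]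
    rw [← Real.rpow_add hω, ← Real.rpow_add hω]
    rw [show (-1 + -(-1/ρ * (ρ-1)) + -1/ρ * (μ-1)) = -(μ/ρ) from by
      field_simp
      ring]
    ring
  have hKeq : K = (4*M + V) * (m⁻¹ * ω ^ (-(μ/ρ))) := by
    rw [hKdef, show (ω * (δ ^ (ρ-1) * m))⁻¹ * (4 * (δ ^ (μ-1) * M) + δ ^ (μ-1) * V) =
      (4*M + V) * ((ω * (δ ^ (ρ-1) * m))⁻¹ * δ ^ (μ-1)) from by ring, hKmul]
  rw [hδμ, hKeq]
  have hW0 : (0:ℝ) ≤ ω ^ (-(μ/ρ)) := Real.rpow_nonneg hω.le _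
  have key2 : M * ω ^ (-(μ/ρ)) ≤ M * ω ^ (-(μ/ρ)) / μ := by
    rw [le_div_iff₀ hμ0]
    nlinarith [mul_nonneg hM0 hW0]
  have hRHS : ((3/μ) * M + (8*M + 2*V) * m⁻¹) * ω ^ (-(μ/ρ)) =
      3 * (M * ω ^ (-(μ/ρ)) / μ) + 2 * ((4*M + V) * (m⁻¹ * ω ^ (-(μ/ρ)))) := by
    ring
  rw [hRHS]
  have hLHS : M * ω ^ (-(μ/ρ)) / μ = M * ω ^ (-(μ/ρ)) / μ := rfl
  linarith [key2]
end

section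
/- Let ρ > 1, μ ∈ (0,1], let I be an open interval containing [p₁,p₂], and p₀ ∈ I∖[p₁,p₂]. Suppose ψ satisfies Assumption (P_{p₀,ρ}) on I and ψ' is monotone on [p₁,p₂], and U satisfies Assumption (A_{p₁,μ}). Then for all ω > 0, |∫_{p₁}^{p₂} U(p) e^{iωψ(p)} dp| ≤ [(2/μ)‖ũ‖_∞ + (4‖ũ‖_∞ + ‖ũ'‖_{L¹})·m^{−1}] · ω^{−μ/ρ}, where m = min_{[p₁,p₂]} |ψ̃|; in particular the bound is uniform with respect to the distance between p₀ and [p₁,p₂]. -/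
open MeasureTheory intervalIntegral Set

open scoped NNReal

lemma aux_deriv_nonneg {f f' : ℝ → ℝ} {c d : ℝ} (hcd : c < d)
    (hm : MonotoneOn f (Set.Icc c d))
    (hf : ∀ p ∈ Set.Icc c d, HasDerivAt f (f' p) p) :
    ∀ p ∈ Set.Icc c d, 0 ≤ f' p := by
  intro p hp
  have hslope := hasDerivAt_iff_tendsto_slope.1 (hf p hp)
  rcases lt_or_eq_of_le hp.2 with h2 | h2
  · have hsub : Set.Ioi p ⊆ {p}ᶜ := fun x hx => ne_of_gt hx
    have h := hslope.mono_left (nhdsWithin_mono p hsub)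
    refine ge_of_tendsto h ?_
    filter_upwards [Ioo_mem_nhdsGT_of_mem ⟨le_refl p, h2⟩] with x hx
    have hx1 : x ∈ Set.Icc c d := ⟨le_trans hp.1 hx.1.le, hx.2.le⟩
    rw [slope_def_field]
    exact div_nonneg (by linarith [hm hp hx1 hx.1.le]) (by linarith [hx.1])
  · have hc : c < p := h2 ▸ hcd
    have hsub : Set.Iio p ⊆ {p}ᶜ := fun x hx => ne_of_lt hx
    have h := hslope.mono_left (nhdsWithin_mono p hsub)
    refine ge_of_tendsto h ?_
    filter_upwards [Ioo_mem_nhdsLT_of_mem ⟨hc, le_refl p⟩] with x hx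
    have hx1 : x ∈ Set.Icc c d := ⟨hx.1.le, le_trans hx.2.le hp.2⟩
    rw [slope_def_field]
    exact div_nonneg_of_nonpos (by linarith [hm hx1 hp hx.2.le]) (by linarith [hx.2])

lemma aux_sign {f : ℝ → ℝ} {c d : ℝ} (hcd : c ≤ d) (hc : ContinuousOn f (Set.Icc c d))
    (h0 : ∀ p ∈ Set.Icc c d, f p ≠ 0) :
    (∀ p ∈ Set.Icc c d, 0 < f p) ∨ (∀ p ∈ Set.Icc c d, f p < 0) := by
  rcases (h0 c ⟨le_refl c, hcd⟩).lt_or_gt with h | h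
  · right
    intro p hp
    by_contra hle
    have hpos : 0 < f p := (h0 p hp).lt_or_gt.resolve_left hle
    have : (0:ℝ) ∈ Set.Icc (f c) (f p) := ⟨h.le, hpos.le⟩
    obtain ⟨x, hx, hx0⟩ := intermediate_value_Icc hp.1 (hc.mono (Icc_subset_Icc_right hp.2)) this
    exact h0 x ⟨hx.1, le_trans hx.2 hp.2⟩ hx0
  · left
    intro p hp
    by_contra hle
    have hneg : f p < 0 := (h0 p hp).lt_or_gt.resolve_right (by push_neg at hle; exact not_lt.2 hle)
    have : (0:ℝ) ∈ Set.Icc (f p) (f c) := ⟨hneg.le, h.le⟩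
    obtain ⟨x, hx, hx0⟩ := intermediate_value_Icc' hp.1 (hc.mono (Icc_subset_Icc_right hp.2)) this
    exact h0 x ⟨hx.1, le_trans hx.2 hp.2⟩ hx0
lemma aux_norm_exp (Ω x : ℝ) : ‖Complex.exp (Complex.I * Ω * x)‖ = 1 := by
  rw [Complex.norm_exp]
  simp

lemma vdc {ψv dψ ddψ : ℝ → ℝ} {f f' : ℝ → ℂ} {c d lam Ω B : ℝ}
    (hcd : c ≤ d) (hΩ : 0 < Ω) (hlam : 0 < lam)
    (hψ : ∀ p ∈ Set.Icc c d, HasDerivAt ψv (dψ p) p)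
    (hdψc : ContinuousOn dψ (Set.Icc c d))
    (hddψ : ∀ p ∈ Set.Icc c d, HasDerivAt dψ (ddψ p) p)
    (hddψc : ContinuousOn ddψ (Set.Icc c d))
    (hlow : ∀ p ∈ Set.Icc c d, lam ≤ |dψ p|)
    (hsgn : (∀ p ∈ Set.Icc c d, 0 ≤ ddψ p) ∨ (∀ p ∈ Set.Icc c d, ddψ p ≤ 0))
    (hf : ContinuousOn f (Set.Icc c d))
    (hf' : ∀ p ∈ Set.Ioo c d, HasDerivAt f (f' p) p)
    (hf'int : IntervalIntegrable f' volume c d)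
    (hB : ∀ p ∈ Set.Icc c d, ‖f p‖ ≤ B) :
    ‖∫ p in c..d, f p * Complex.exp (Complex.I * Ω * ψv p)‖ ≤
      (3 * B + ∫ p in c..d, ‖f' p‖) / (Ω * lam) := by
  have hIcc : Set.uIcc c d = Set.Icc c d := Set.uIcc_of_le hcd
  have hIoc : Set.uIoc c d = Set.Ioc c d := Set.uIoc_of_le hcd
  set E : ℝ → ℂ := fun p => Complex.exp (Complex.I * Ω * ψv p) with hE_def
  set r : ℝ → ℝ := fun p => (dψ p)⁻¹ with hr_def
  have hne : ∀ p ∈ Set.Icc c d, dψ p ≠ 0 := by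
    intro p hp h
    have := hlow p hp
    rw [h, abs_zero] at this; linarith
  have hIΩ : (Complex.I * (Ω:ℂ)) ≠ 0 := by
    apply mul_ne_zero Complex.I_ne_zero
    simpa using hΩ.ne'
  set g : ℝ → ℂ := fun p => f p * ((r p : ℝ) : ℂ) * (Complex.I * (Ω:ℂ))⁻¹ with hg_def
  set g' : ℝ → ℂ := fun p =>
    (f' p * ((r p : ℝ) : ℂ) + f p * ((-(ddψ p) * (r p)^2 : ℝ) : ℂ)) * (Complex.I * (Ω:ℂ))⁻¹
    with hg'_def
  have hrle : ∀ p ∈ Set.Icc c d, |r p| ≤ lam⁻¹ := by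
    intro p hp
    rw [hr_def, abs_inv]
    exact inv_anti₀ hlam (hlow p hp)
  have hrc : ContinuousOn r (Set.Icc c d) := hdψc.inv₀ hne
  have hrcC : ContinuousOn (fun p => ((r p : ℝ) : ℂ)) (Set.Icc c d) :=
    Complex.continuous_ofReal.comp_continuousOn hrc
  have hψcont : ContinuousOn ψv (Set.Icc c d) := fun p hp =>
    (hψ p hp).continuousAt.continuousWithinAt
  have hEcont : ContinuousOn E (Set.Icc c d) :=
    Complex.continuous_exp.comp_continuousOn
      (continuousOn_const.mul (Complex.continuous_ofReal.comp_continuousOn hψcont))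
  have hEnorm : ∀ p, ‖E p‖ = 1 := fun p => aux_norm_exp Ω (ψv p)
  have hE : ∀ p ∈ Set.Icc c d, HasDerivAt E (E p * (Complex.I * (Ω:ℂ) * (dψ p : ℂ))) p := by
    intro p hp
    exact (((hψ p hp).ofReal_comp).const_mul (Complex.I * (Ω:ℂ))).cexp
  have hr' : ∀ p ∈ Set.Icc c d, HasDerivAt r (-(ddψ p) * (r p)^2) p := by
    intro p hp
    have h := (hddψ p hp).inv (hne p hp)
    refine h.congr_deriv ?_
    rw [hr_def]
    field_simp
  have hg : ∀ p ∈ Set.Ioo c d, HasDerivAt g (g' p) p := by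
    intro p hp
    have hp' := Set.Ioo_subset_Icc_self hp
    have hrp : HasDerivAt (fun q => ((r q : ℝ) : ℂ)) ((-(ddψ p) * (r p)^2 : ℝ) : ℂ) p :=
      (hr' p hp').ofReal_comp
    exact ((hf' p hp).mul hrp).mul_const _
  have hG : ∀ p ∈ Set.Ioo c d,
      HasDerivAt (fun q => g q * E q) (g' p * E p + f p * E p) p := by
    intro p hp
    have hp' := Set.Ioo_subset_Icc_self hp
    have h := (hg p hp).mul (hE p hp')
    refine h.congr_deriv ?_
    have hd : (dψ p : ℂ) ≠ 0 := by
      simpa using hne p hp'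
    have hΩ' : (Ω:ℂ) ≠ 0 := by simpa using hΩ.ne'
    rw [hg_def, hr_def]
    push_cast
    field_simp
  -- integrability pieces
  have hF2cont : ContinuousOn
      (fun p => f p * ((-(ddψ p) * (r p)^2 : ℝ) : ℂ) * (Complex.I * (Ω:ℂ))⁻¹ * E p)
      (Set.Icc c d) := by
    apply ContinuousOn.mul _ hEcont
    apply ContinuousOn.mul _ continuousOn_const
    exact hf.mul (Complex.continuous_ofReal.comp_continuousOn
      ((hddψc.neg.mul (hrc.pow 2))))
  have hF2int : IntervalIntegrable
      (fun p => f p * ((-(ddψ p) * (r p)^2 : ℝ) : ℂ) * (Complex.I * (Ω:ℂ))⁻¹ * E p)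
      volume c d := by
    apply ContinuousOn.intervalIntegrable
    rwa [hIcc]
  have hF1int : IntervalIntegrable
      (fun p => f' p * (((r p : ℝ) : ℂ) * (Complex.I * (Ω:ℂ))⁻¹ * E p)) volume c d := by
    apply hf'int.mul_continuousOn
    rw [hIcc]
    exact (hrcC.mul continuousOn_const).mul hEcont
  have hg'E_eq : ∀ p, g' p * E p =
      f' p * (((r p : ℝ) : ℂ) * (Complex.I * (Ω:ℂ))⁻¹ * E p) +
      f p * ((-(ddψ p) * (r p)^2 : ℝ) : ℂ) * (Complex.I * (Ω:ℂ))⁻¹ * E p := by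
    intro p; rw [hg'_def]; ring
  have hg'Eint : IntervalIntegrable (fun p => g' p * E p) volume c d := by
    apply (hF1int.add hF2int).congr
    exact fun p _ => (hg'E_eq p).symm
  have hfEcont : ContinuousOn (fun p => f p * E p) (Set.Icc c d) := hf.mul hEcont
  have hfEint : IntervalIntegrable (fun p => f p * E p) volume c d := by
    apply ContinuousOn.intervalIntegrable; rwa [hIcc]
  have hGcont : ContinuousOn (fun p => g p * E p) (Set.Icc c d) :=
    ((hf.mul hrcC).mul continuousOn_const).mul hEcont
  have hFTC : ∫ p in c..d, (g' p * E p + f p * E p) = g d * E d - g c * E c := by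
    apply integral_eq_sub_of_hasDeriv_right_of_le hcd hGcont
      (fun p hp => (hG p hp).hasDerivWithinAt) (hg'Eint.add hfEint)
  have hsplit : ∫ p in c..d, f p * E p =
      (g d * E d - g c * E c) - ∫ p in c..d, g' p * E p := by
    rw [← hFTC, integral_add hg'Eint hfEint]; ring
  -- bounds
  have hB0 : 0 ≤ B := le_trans (norm_nonneg _) (hB c ⟨le_refl c, hcd⟩)
  have hnormIΩ : ‖(Complex.I * (Ω:ℂ))⁻¹‖ = Ω⁻¹ := by
    rw [norm_inv, norm_mul, Complex.norm_I, one_mul, Complex.norm_real,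
      Real.norm_eq_abs, abs_of_pos hΩ]
  have hgEbound : ∀ p ∈ Set.Icc c d, ‖g p * E p‖ ≤ B * lam⁻¹ * Ω⁻¹ := by
    intro p hp
    rw [hg_def]
    simp only [norm_mul, hEnorm p, mul_one, hnormIΩ, Complex.norm_real, Real.norm_eq_abs]
    have := hrle p hp
    have := hB p hp
    have : ‖f p‖ * |r p| ≤ B * lam⁻¹ := by
      apply mul_le_mul (hB p hp) (hrle p hp) (abs_nonneg _) hB0
    nlinarith [inv_pos.2 hΩ]
  -- F1 integral bound
  have hF1bound : ‖∫ p in c..d, f' p * (((r p : ℝ) : ℂ) * (Complex.I * (Ω:ℂ))⁻¹ * E p)‖ ≤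
      (∫ p in c..d, ‖f' p‖) * (lam⁻¹ * Ω⁻¹) := by
    have h1 : ∀ᵐ t ∂(volume.restrict (Set.uIoc c d)),
        ‖f' t * (((r t : ℝ) : ℂ) * (Complex.I * (Ω:ℂ))⁻¹ * E t)‖ ≤
          ‖f' t‖ * (lam⁻¹ * Ω⁻¹) := by
      rw [hIoc]
      refine (ae_restrict_iff' measurableSet_Ioc).2 (Filter.Eventually.of_forall ?_)
      intro t ht
      have ht' : t ∈ Set.Icc c d := Set.Ioc_subset_Icc_self ht
      rw [norm_mul, norm_mul, norm_mul, hEnorm t, mul_one, hnormIΩ,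
        Complex.norm_real, Real.norm_eq_abs]
      have h2 : |r t| * Ω⁻¹ ≤ lam⁻¹ * Ω⁻¹ :=
        mul_le_mul_of_nonneg_right (hrle t ht') (by positivity)
      exact mul_le_mul_of_nonneg_left h2 (norm_nonneg _)
    have hbint : IntervalIntegrable (fun t => ‖f' t‖ * (lam⁻¹ * Ω⁻¹)) volume c d :=
      hf'int.norm.mul_const _
    refine le_trans (le_trans (intervalIntegral.norm_integral_le_of_norm_le hcd
      ((ae_restrict_iff' measurableSet_Ioc).1 (by rwa [hIoc] at h1)) hbint) (le_abs_self _)) ?_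
    rw [intervalIntegral.integral_mul_const, abs_mul]
    rw [abs_of_nonneg (integral_nonneg hcd (fun t _ => norm_nonneg _)),
      abs_of_nonneg (by positivity)]
  -- F2 integral bound
  have hrabs : |r c - r d| ≤ lam⁻¹ := by
    have hc1 : c ∈ Set.Icc c d := ⟨le_refl c, hcd⟩
    have hd1 : d ∈ Set.Icc c d := ⟨hcd, le_refl d⟩
    rcases aux_sign hcd hdψc hne with hpos | hneg
    · have h1 : 0 < r c := inv_pos.2 (hpos c hc1)
      have h2 : 0 < r d := inv_pos.2 (hpos d hd1)
      have h3 := (abs_le.1 (hrle c hc1)).2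
      have h4 := (abs_le.1 (hrle d hd1)).2
      rw [abs_le]; constructor <;> linarith
    · have h1 : r c < 0 := inv_neg''.2 (hneg c hc1)
      have h2 : r d < 0 := inv_neg''.2 (hneg d hd1)
      have h3 := (abs_le.1 (hrle c hc1)).1
      have h4 := (abs_le.1 (hrle d hd1)).1
      rw [abs_le]; constructor <;> linarith
  have hwint : IntervalIntegrable (fun p => -(ddψ p) * (r p)^2) volume c d := by
    apply ContinuousOn.intervalIntegrable
    rw [hIcc]
    exact hddψc.neg.mul (hrc.pow 2)
  have hwFTC : ∫ p in c..d, -(ddψ p) * (r p)^2 = r d - r c := by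
    apply integral_eq_sub_of_hasDerivAt _ hwint
    intro p hp
    rw [hIcc] at hp
    exact hr' p hp
  have habsw : ∫ p in c..d, |ddψ p| * (r p)^2 ≤ lam⁻¹ := by
    rcases hsgn with hpos | hneg
    · have heq : Set.EqOn (fun p => |ddψ p| * (r p)^2) (fun p => -(-(ddψ p) * (r p)^2))
          (Set.uIcc c d) := by
        intro p hp
        rw [hIcc] at hp
        simp only [abs_of_nonneg (hpos p hp)]
        ring
      rw [integral_congr heq, intervalIntegral.integral_neg, hwFTC]
      have := abs_le.1 hrabs
      linarith [this.2, this.1]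
    · have heq : Set.EqOn (fun p => |ddψ p| * (r p)^2) (fun p => -(ddψ p) * (r p)^2)
          (Set.uIcc c d) := by
        intro p hp
        rw [hIcc] at hp
        simp only [abs_of_nonpos (hneg p hp)]
      rw [integral_congr heq, hwFTC]
      have := abs_le.1 hrabs
      linarith [this.1]
  have hF2bound : ‖∫ p in c..d,
      f p * ((-(ddψ p) * (r p)^2 : ℝ) : ℂ) * (Complex.I * (Ω:ℂ))⁻¹ * E p‖ ≤
      B * Ω⁻¹ * lam⁻¹ := by
    have h1 : ∀ᵐ t ∂(volume.restrict (Set.uIoc c d)),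
        ‖f t * ((-(ddψ t) * (r t)^2 : ℝ) : ℂ) * (Complex.I * (Ω:ℂ))⁻¹ * E t‖ ≤
          B * Ω⁻¹ * (|ddψ t| * (r t)^2) := by
      rw [hIoc]
      refine (ae_restrict_iff' measurableSet_Ioc).2 (Filter.Eventually.of_forall ?_)
      intro t ht
      have ht' : t ∈ Set.Icc c d := Set.Ioc_subset_Icc_self ht
      rw [norm_mul, norm_mul, norm_mul, hEnorm t, mul_one, hnormIΩ,
        Complex.norm_real, Real.norm_eq_abs, abs_mul, abs_neg, abs_of_nonneg (sq_nonneg (r t))]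
      have key : ‖f t‖ * ((|ddψ t| * (r t)^2) * Ω⁻¹) ≤ B * ((|ddψ t| * (r t)^2) * Ω⁻¹) :=
        mul_le_mul_of_nonneg_right (hB t ht') (by positivity)
      calc ‖f t‖ * (|ddψ t| * (r t)^2) * Ω⁻¹
          = ‖f t‖ * ((|ddψ t| * (r t)^2) * Ω⁻¹) := by ring
        _ ≤ B * ((|ddψ t| * (r t)^2) * Ω⁻¹) := key
        _ = B * Ω⁻¹ * (|ddψ t| * (r t)^2) := by ring
    have hbint : IntervalIntegrable (fun t => B * Ω⁻¹ * (|ddψ t| * (r t)^2)) volume c d := by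
      apply ContinuousOn.intervalIntegrable
      rw [hIcc]
      exact continuousOn_const.mul (hddψc.abs.mul (hrc.pow 2))
    refine le_trans (le_trans (intervalIntegral.norm_integral_le_of_norm_le hcd
      ((ae_restrict_iff' measurableSet_Ioc).1 (by rwa [hIoc] at h1)) hbint) (le_abs_self _)) ?_
    rw [intervalIntegral.integral_const_mul]
    have hw0 : 0 ≤ ∫ p in c..d, |ddψ p| * (r p)^2 :=
      integral_nonneg hcd (fun t _ => by positivity)
    rw [abs_of_nonneg (by positivity)]
    exact mul_le_mul_of_nonneg_left habsw (by positivity)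
  -- assemble
  have hg'Esplit : ∫ p in c..d, g' p * E p =
      (∫ p in c..d, f' p * (((r p : ℝ) : ℂ) * (Complex.I * (Ω:ℂ))⁻¹ * E p)) +
      ∫ p in c..d, f p * ((-(ddψ p) * (r p)^2 : ℝ) : ℂ) * (Complex.I * (Ω:ℂ))⁻¹ * E p := by
    rw [integral_congr (fun p _ => hg'E_eq p), integral_add hF1int hF2int]
  have hmain : ‖∫ p in c..d, f p * E p‖ ≤
      B * lam⁻¹ * Ω⁻¹ + B * lam⁻¹ * Ω⁻¹ +
        ((∫ p in c..d, ‖f' p‖) * (lam⁻¹ * Ω⁻¹) + B * Ω⁻¹ * lam⁻¹) := by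
    rw [hsplit]
    have h2 : ‖∫ p in c..d, g' p * E p‖ ≤
        (∫ p in c..d, ‖f' p‖) * (lam⁻¹ * Ω⁻¹) + B * Ω⁻¹ * lam⁻¹ := by
      rw [hg'Esplit]
      exact le_trans (norm_add_le _ _) (add_le_add hF1bound hF2bound)
    have h3 : ‖g d * E d - g c * E c - ∫ p in c..d, g' p * E p‖ ≤
        ‖g d * E d‖ + ‖g c * E c‖ + ‖∫ p in c..d, g' p * E p‖ := by
      refine le_trans (norm_sub_le _ _) ?_
      have := norm_sub_le (g d * E d) (g c * E c)
      linarith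
    refine le_trans h3 ?_
    have hgd := hgEbound d ⟨hcd, le_refl d⟩
    have hgc := hgEbound c ⟨le_refl c, hcd⟩
    linarith
  have heqRHS : (3 * B + ∫ p in c..d, ‖f' p‖) / (Ω * lam) =
      B * lam⁻¹ * Ω⁻¹ + B * lam⁻¹ * Ω⁻¹ +
        ((∫ p in c..d, ‖f' p‖) * (lam⁻¹ * Ω⁻¹) + B * Ω⁻¹ * lam⁻¹) := by
    field_simp
    ring
  rw [heqRHS]
  exact hmain

lemma rpow_shift_integrable {μ p₁ : ℝ} (hμ : 0 < μ) (x y : ℝ) :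
    IntervalIntegrable (fun p => (p - p₁) ^ (μ - 1)) volume x y := by
  have h := (intervalIntegrable_rpow' (by linarith : (-1:ℝ) < μ - 1)
    (a := x - p₁) (b := y - p₁)).comp_sub_right p₁
  simpa using h

lemma rpow_shift_integral {μ p₁ : ℝ} (hμ : 0 < μ) (x y : ℝ) :
    ∫ p in x..y, (p - p₁) ^ (μ - 1) = ((y - p₁) ^ μ - (x - p₁) ^ μ) / μ := by
  have h := integral_comp_sub_right (a := x) (b := y) (fun t => t ^ (μ - 1)) p₁
  rw [h, integral_rpow (Or.inl (by linarith : (-1:ℝ) < μ - 1))]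
  rw [sub_add_cancel]

lemma near_bound {μ p₁ p₂ x y M : ℝ} {U ut : ℝ → ℂ} (ψ : ℝ → ℝ)
    (hμ : 0 < μ)
    (hU : ∀ p ∈ Set.Ioc p₁ p₂, U p = (((p - p₁) ^ (μ - 1) : ℝ) : ℂ) * ut p)
    (hM : ∀ p ∈ Set.Icc p₁ p₂, ‖ut p‖ ≤ M)
    (hx : p₁ ≤ x) (hxy : x ≤ y) (hy : y ≤ p₂) (Ω : ℝ) :
    ‖∫ p in x..y, U p * Complex.exp (Complex.I * Ω * ψ p)‖ ≤
      M * (((y - p₁) ^ μ - (x - p₁) ^ μ) / μ) := by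
  have hM0 : 0 ≤ M := le_trans (norm_nonneg _) (hM p₁ ⟨le_refl _, le_trans (le_trans hx hxy) hy⟩)
  have h1 : ∀ᵐ t ∂(volume.restrict (Set.uIoc x y)),
      ‖U t * Complex.exp (Complex.I * Ω * ψ t)‖ ≤ M * (t - p₁) ^ (μ - 1) := by
    rw [uIoc_of_le hxy]
    refine (ae_restrict_iff' measurableSet_Ioc).2 (Filter.Eventually.of_forall ?_)
    intro t ht
    have ht' : t ∈ Set.Ioc p₁ p₂ := ⟨lt_of_le_of_lt hx ht.1, le_trans ht.2 hy⟩
    rw [norm_mul, hU t ht', norm_mul, Complex.norm_real, Real.norm_eq_abs,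
      abs_of_nonneg (Real.rpow_nonneg (by linarith [ht'.1] : 0 ≤ t - p₁) _)]
    have he : ‖Complex.exp (Complex.I * Ω * ψ t)‖ = 1 := by
      rw [Complex.norm_exp]; simp
    rw [he, mul_one, mul_comm M _]
    exact mul_le_mul_of_nonneg_left (hM t ⟨ht'.1.le, ht'.2⟩)
      (Real.rpow_nonneg (by linarith [ht'.1]) _)
  have hbint : IntervalIntegrable (fun t => M * (t - p₁) ^ (μ - 1)) volume x y :=
    (rpow_shift_integrable hμ x y).const_mul M
  refine le_trans (le_trans (intervalIntegral.norm_integral_le_of_norm_le hxy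
    ((ae_restrict_iff' measurableSet_Ioc).1 (by rwa [uIoc_of_le hxy] at h1)) hbint) (le_abs_self _)) ?_
  rw [intervalIntegral.integral_const_mul, rpow_shift_integral hμ x y, abs_mul,
    abs_of_nonneg hM0]
  have h2 : (x - p₁) ^ μ ≤ (y - p₁) ^ μ :=
    Real.rpow_le_rpow (by linarith) (by linarith) hμ.le
  rw [abs_of_nonneg (div_nonneg (by linarith) hμ.le)]

lemma far_bound {ρ μ a b p₁ p₂ p₀ M V m δ c d Ω : ℝ} {ψ ψt : ℝ → ℝ} {U ut : ℝ → ℂ}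
    (hρ : 1 < ρ) (hμ : 0 < μ) (hμ1 : μ ≤ 1)
    (hI : Set.Icc p₁ p₂ ⊆ Set.Ioo a b)
    (hψ1 : ContDiffOn ℝ 1 ψ (Set.Ioo a b))
    (hψ2 : ContDiffOn ℝ 2 ψ (Set.Ioo a b \ {p₀}))
    (hfact : ∀ p ∈ Set.Ioo a b, deriv ψ p = |p - p₀| ^ (ρ - 1) * ψt p)
    (hmono : MonotoneOn (deriv ψ) (Set.Icc p₁ p₂) ∨ AntitoneOn (deriv ψ) (Set.Icc p₁ p₂))
    (hU : ∀ p ∈ Set.Ioc p₁ p₂, U p = (((p - p₁) ^ (μ - 1) : ℝ) : ℂ) * ut p)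
    (hutc : ContinuousOn ut (Set.Icc p₁ p₂))
    (hutd : ∀ p ∈ Set.Ioo p₁ p₂, DifferentiableAt ℝ ut p)
    (hutint : IntervalIntegrable (deriv ut) volume c d)
    (hM : ∀ p ∈ Set.Icc p₁ p₂, ‖ut p‖ ≤ M)
    (hm : ∀ p ∈ Set.Icc p₁ p₂, m ≤ |ψt p|) (hm0 : 0 < m)
    (hVge : ∫ p in c..d, ‖deriv ut p‖ ≤ V)
    (hδ0 : 0 < δ) (hcδ : p₁ + δ ≤ c) (hcd : c < d) (hd : d ≤ p₂)
    (hdist : ∀ p ∈ Set.Icc c d, δ ≤ |p - p₀|)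
    (hΩ : 0 < Ω) :
    ‖∫ p in c..d, U p * Complex.exp (Complex.I * Ω * ψ p)‖ ≤
      (4 * M + V) * δ ^ (μ - 1) / (Ω * (m * δ ^ (ρ - 1))) := by
  have hM0 : 0 ≤ M := le_trans (norm_nonneg _) (hM p₁ ⟨le_refl _, by linarith⟩)
  have hsub : Set.Icc c d ⊆ Set.Icc p₁ p₂ := Set.Icc_subset_Icc (by linarith) hd
  have hsub2 : Set.Icc c d ⊆ Set.Ioo a b := fun p hp => hI (hsub hp)
  have hopen : IsOpen (Set.Ioo a b \ {p₀}) := isOpen_Ioo.sdiff isClosed_singleton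
  have hsub3 : Set.Icc c d ⊆ Set.Ioo a b \ {p₀} := by
    intro p hp
    refine ⟨hsub2 hp, ?_⟩
    intro h
    rw [Set.mem_singleton_iff] at h
    have := hdist p hp
    rw [h, sub_self, abs_zero] at this
    linarith
  set dψ : ℝ → ℝ := deriv ψ with hdψ_def
  set ddψ : ℝ → ℝ := deriv (deriv ψ) with hddψ_def
  have hψHD : ∀ p ∈ Set.Icc c d, HasDerivAt ψ (dψ p) p := fun p hp =>
    ((hψ1.differentiableOn one_ne_zero).differentiableAt
      (isOpen_Ioo.mem_nhds (hsub2 hp))).hasDerivAt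
  have hdψc : ContinuousOn dψ (Set.Icc c d) :=
    (hψ1.continuousOn_deriv_of_isOpen isOpen_Ioo le_rfl).mono hsub2
  have hψ2' : ContDiffOn ℝ 1 (deriv ψ) (Set.Ioo a b \ {p₀}) :=
    hψ2.deriv_of_isOpen hopen (by norm_num)
  have hddψHD : ∀ p ∈ Set.Icc c d, HasDerivAt dψ (ddψ p) p := fun p hp =>
    ((hψ2'.differentiableOn one_ne_zero).differentiableAt
      (hopen.mem_nhds (hsub3 hp))).hasDerivAt
  have hddψc : ContinuousOn ddψ (Set.Icc c d) :=
    (hψ2'.continuousOn_deriv_of_isOpen hopen le_rfl).mono hsub3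
  have hlam : 0 < m * δ ^ (ρ - 1) := by positivity
  have hlow : ∀ p ∈ Set.Icc c d, m * δ ^ (ρ - 1) ≤ |dψ p| := by
    intro p hp
    rw [hfact p (hsub2 hp), abs_mul,
      abs_of_nonneg (Real.rpow_nonneg (abs_nonneg _) _)]
    have h1 : δ ^ (ρ - 1) ≤ |p - p₀| ^ (ρ - 1) :=
      Real.rpow_le_rpow hδ0.le (hdist p hp) (by linarith)
    have h2 : m ≤ |ψt p| := hm p (hsub hp)
    calc m * δ ^ (ρ - 1) ≤ |ψt p| * |p - p₀| ^ (ρ - 1) :=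
          mul_le_mul h2 h1 (Real.rpow_nonneg hδ0.le _) (abs_nonneg _)
      _ = |p - p₀| ^ (ρ - 1) * |ψt p| := mul_comm _ _
  have hsgn : (∀ p ∈ Set.Icc c d, 0 ≤ ddψ p) ∨ (∀ p ∈ Set.Icc c d, ddψ p ≤ 0) := by
    rcases hmono with hmono | hanti
    · left
      exact aux_deriv_nonneg hcd (hmono.mono hsub) hddψHD
    · right
      have hmono2 : MonotoneOn (fun p => -dψ p) (Set.Icc c d) :=
        fun x hx y hy hxy => neg_le_neg (hanti (hsub hx) (hsub hy) hxy)
      have h := aux_deriv_nonneg hcd hmono2 (fun p hp => (hddψHD p hp).neg)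
      intro p hp
      linarith [h p hp]
  -- amplitude facts
  have hbase : ∀ p ∈ Set.Icc c d, δ ≤ p - p₁ := fun p hp => by linarith [hp.1]
  have hrpowc : ∀ (e : ℝ), ContinuousOn (fun p : ℝ => (p - p₁) ^ e) (Set.Icc c d) := by
    intro e
    apply ContinuousOn.rpow_const (by fun_prop)
    intro x hx
    left
    have := hbase x hx
    intro h
    rw [h] at this
    linarith
  have hUc : ContinuousOn U (Set.Icc c d) := by
    apply ContinuousOn.congr
      ((Complex.continuous_ofReal.comp_continuousOn (hrpowc (μ-1))).mul (hutc.mono hsub))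
    intro p hp
    exact hU p ⟨by linarith [hp.1], le_trans hp.2 hd⟩
  set U' : ℝ → ℂ := fun p =>
    (((μ - 1) * (p - p₁) ^ (μ - 2) : ℝ) : ℂ) * ut p +
    (((p - p₁) ^ (μ - 1) : ℝ) : ℂ) * deriv ut p with hU'_def
  have hU'd : ∀ p ∈ Set.Ioo c d, HasDerivAt U (U' p) p := by
    intro p hp
    have hpp : p ∈ Set.Ioo p₁ p₂ := ⟨by linarith [hp.1], lt_of_lt_of_le hp.2 hd⟩
    have hne : p - p₁ ≠ 0 := by linarith [hpp.1]
    have h1 : HasDerivAt (fun q : ℝ => (q - p₁) ^ (μ - 1)) ((μ - 1) * (p - p₁) ^ (μ - 2)) p := by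
      have h0 := ((hasDerivAt_id p).sub_const p₁).rpow_const (p := μ - 1) (Or.inl hne)
      rw [show μ - 1 - 1 = μ - 2 by ring] at h0
      simpa using h0
    have h2 : HasDerivAt (fun q : ℝ => (((q - p₁) ^ (μ - 1) : ℝ) : ℂ))
        (((μ - 1) * (p - p₁) ^ (μ - 2) : ℝ) : ℂ) p := h1.ofReal_comp
    have h3 := h2.mul (hutd p hpp).hasDerivAt
    have heq : U =ᶠ[nhds p] fun q => (((q - p₁) ^ (μ - 1) : ℝ) : ℂ) * ut q := by
      filter_upwards [isOpen_Ioo.mem_nhds hpp] with q hq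
      exact hU q (Set.Ioo_subset_Ioc_self hq)
    exact (h3.congr_of_eventuallyEq heq)
  have hU'int : IntervalIntegrable U' volume c d := by
    apply IntervalIntegrable.add
    · apply ContinuousOn.intervalIntegrable
      rw [Set.uIcc_of_le hcd.le]
      exact (Complex.continuous_ofReal.comp_continuousOn
        ((continuousOn_const.mul (hrpowc (μ-2))))).mul (hutc.mono hsub)
    · apply hutint.continuousOn_mul
      rw [Set.uIcc_of_le hcd.le]
      exact Complex.continuous_ofReal.comp_continuousOn (hrpowc (μ-1))
  have hrpow_le : ∀ p ∈ Set.Icc c d, (p - p₁) ^ (μ - 1) ≤ δ ^ (μ - 1) := fun p hp =>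
    Real.rpow_le_rpow_of_nonpos hδ0 (hbase p hp) (by linarith)
  have hBU : ∀ p ∈ Set.Icc c d, ‖U p‖ ≤ M * δ ^ (μ - 1) := by
    intro p hp
    rw [hU p ⟨by linarith [hp.1], le_trans hp.2 hd⟩, norm_mul, Complex.norm_real,
      Real.norm_eq_abs, abs_of_nonneg (Real.rpow_nonneg (by linarith [hbase p hp]) _)]
    calc (p - p₁) ^ (μ - 1) * ‖ut p‖ ≤ δ ^ (μ - 1) * M :=
          mul_le_mul (hrpow_le p hp) (hM p (hsub hp)) (norm_nonneg _)
            (Real.rpow_nonneg hδ0.le _)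
      _ = M * δ ^ (μ - 1) := mul_comm _ _
  have hmain := vdc hcd.le hΩ hlam hψHD hdψc hddψHD hddψc hlow hsgn hUc hU'd hU'int hBU
  -- bound the integral of ‖U'‖
  have hV0 : 0 ≤ V := le_trans (integral_nonneg hcd.le fun p _ => norm_nonneg _) hVge
  have hU'bound : ∫ p in c..d, ‖U' p‖ ≤ (M + V) * δ ^ (μ - 1) := by
    have hg2int : IntervalIntegrable
        (fun p => (1 - μ) * (p - p₁) ^ (μ - 2) * M + δ ^ (μ - 1) * ‖deriv ut p‖)
        volume c d := by
      apply IntervalIntegrable.add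
      · apply ContinuousOn.intervalIntegrable
        rw [Set.uIcc_of_le hcd.le]
        exact (continuousOn_const.mul (hrpowc (μ-2))).mul continuousOn_const
      · exact (hutint.norm).const_mul _
    have hstep : ∫ p in c..d, ‖U' p‖ ≤
        ∫ p in c..d, ((1 - μ) * (p - p₁) ^ (μ - 2) * M + δ ^ (μ - 1) * ‖deriv ut p‖) := by
      apply integral_mono_on hcd.le _ hg2int
      · intro p hp
        have hb := hbase p hp
        rw [hU'_def]
        refine le_trans (norm_add_le _ _) ?_
        rw [norm_mul, norm_mul, Complex.norm_real, Complex.norm_real,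
          Real.norm_eq_abs, Real.norm_eq_abs, abs_mul,
          abs_of_nonneg (Real.rpow_nonneg (by linarith) (μ-2)),
          abs_of_nonneg (Real.rpow_nonneg (by linarith) (μ-1)),
          abs_of_nonpos (by linarith : μ - 1 ≤ 0)]
        have t1 : -(μ-1) * (p - p₁) ^ (μ - 2) * ‖ut p‖ ≤ (1 - μ) * (p - p₁) ^ (μ - 2) * M := by
          have : -(μ-1) = 1 - μ := by ring
          rw [this]
          apply mul_le_mul_of_nonneg_left (hM p (hsub hp))
          exact mul_nonneg (by linarith) (Real.rpow_nonneg (by linarith) _)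
        have t2 : (p - p₁) ^ (μ - 1) * ‖deriv ut p‖ ≤ δ ^ (μ - 1) * ‖deriv ut p‖ :=
          mul_le_mul_of_nonneg_right (hrpow_le p hp) (norm_nonneg _)
        linarith
      · exact hU'int.norm
    refine le_trans hstep ?_
    rw [integral_add _ ((hutint.norm).const_mul _)]
    · have hFTC : ∫ p in c..d, (1 - μ) * (p - p₁) ^ (μ - 2) =
          -((d - p₁) ^ (μ - 1)) - -((c - p₁) ^ (μ - 1)) := by
        apply integral_eq_sub_of_hasDerivAt
        · intro p hp
          rw [Set.uIcc_of_le hcd.le] at hp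
          have hne : p - p₁ ≠ 0 := by
            have := hbase p hp; intro h; rw [h] at this; linarith
          have h1 : HasDerivAt (fun q : ℝ => (q - p₁) ^ (μ - 1))
              ((μ - 1) * (p - p₁) ^ (μ - 2)) p := by
            have h0 := ((hasDerivAt_id p).sub_const p₁).rpow_const (p := μ - 1) (Or.inl hne)
            rw [show μ - 1 - 1 = μ - 2 by ring] at h0
            simpa using h0
          have := h1.neg
          refine this.congr_deriv ?_
          ring
        · apply ContinuousOn.intervalIntegrable
          rw [Set.uIcc_of_le hcd.le]
          exact continuousOn_const.mul (hrpowc (μ-2))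
      have e1 : ∫ p in c..d, (1 - μ) * (p - p₁) ^ (μ - 2) * M =
          (-((d - p₁) ^ (μ - 1)) - -((c - p₁) ^ (μ - 1))) * M := by
        rw [intervalIntegral.integral_mul_const, hFTC]
      have e2 : ∫ p in c..d, δ ^ (μ - 1) * ‖deriv ut p‖ =
          δ ^ (μ - 1) * ∫ p in c..d, ‖deriv ut p‖ := intervalIntegral.integral_const_mul _ _
      rw [e1, e2]
      have h5 : 0 ≤ (d - p₁) ^ (μ - 1) := Real.rpow_nonneg (by nlinarith [hbase d ⟨hcd.le, le_refl d⟩]) _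
      have h6 : (c - p₁) ^ (μ - 1) ≤ δ ^ (μ - 1) := hrpow_le c ⟨le_refl c, hcd.le⟩
      have h7 : ∫ p in c..d, ‖deriv ut p‖ ≤ V := hVge
      have h8 : 0 ≤ δ ^ (μ - 1) := Real.rpow_nonneg hδ0.le _
      nlinarith
    · apply ContinuousOn.intervalIntegrable
      rw [Set.uIcc_of_le hcd.le]
      exact (continuousOn_const.mul (hrpowc (μ-2))).mul continuousOn_const
  refine le_trans hmain ?_
  have hnum : 3 * (M * δ ^ (μ - 1)) + ∫ p in c..d, ‖U' p‖ ≤ (4 * M + V) * δ ^ (μ - 1) := by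
    have h8 : 0 ≤ δ ^ (μ - 1) := Real.rpow_nonneg hδ0.le _
    nlinarith [hU'bound]
  gcongr

lemma rpow_sub_le {x d μ : ℝ} (hx : 0 ≤ x) (hd : 0 ≤ d) (hμ0 : 0 ≤ μ) (hμ1 : μ ≤ 1) :
    (x + d) ^ μ - x ^ μ ≤ d ^ μ := by
  have h := NNReal.rpow_add_le_add_rpow x.toNNReal d.toNNReal hμ0 hμ1
  have hc : ((x.toNNReal + d.toNNReal : ℝ≥0) : ℝ) = x + d := by
    simp [Real.coe_toNNReal x hx, Real.coe_toNNReal d hd]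
  have h2 : (x + d) ^ μ ≤ x ^ μ + d ^ μ := by
    calc (x + d) ^ μ = (((x.toNNReal + d.toNNReal : ℝ≥0)) : ℝ) ^ μ := by rw [hc]
      _ = (((x.toNNReal + d.toNNReal) ^ μ : ℝ≥0) : ℝ) := by rw [NNReal.coe_rpow]
      _ ≤ (((x.toNNReal ^ μ + d.toNNReal ^ μ : ℝ≥0)) : ℝ) := by exact_mod_cast h
      _ = x ^ μ + d ^ μ := by
          push_cast [NNReal.coe_rpow, Real.coe_toNNReal x hx, Real.coe_toNNReal d hd]
          ring
  linarith

lemma far_eq {δ ρ μ ω m A : ℝ} (hδρ : δ ^ ρ = ω⁻¹) (hδ0 : 0 < δ) (hω : 0 < ω) (hm : m ≠ 0) :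
    A * δ ^ (μ - 1) / (ω * (m * δ ^ (ρ - 1))) = A * m⁻¹ * δ ^ μ := by
  have e1 : δ ^ (μ - 1) = δ ^ μ * δ ^ (ρ - 1) * δ ^ (-ρ) := by
    rw [← Real.rpow_add hδ0, ← Real.rpow_add hδ0]
    congr 1
    ring
  have e2 : δ ^ (-ρ) = ω := by rw [Real.rpow_neg hδ0.le, hδρ, inv_inv]
  rw [e1, e2]
  have h1 : δ ^ (ρ - 1) ≠ 0 := (Real.rpow_pos_of_pos hδ0 _).ne'
  field_simp



/-- Extension of the van der Corput Lemma: phase with a stationary point `p₀`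
of order `ρ - 1` (anywhere in the open interval `I = (a,b) ⊇ [p₁,p₂]`) and
amplitude with an integrable singular point of strength `μ - 1` at `p₁`. -/
theorem stmt_9 (ρ μ a b p₁ p₂ p₀ : ℝ) (hρ : 1 < ρ) (hμ : μ ∈ Set.Ioc (0:ℝ) 1)
    (hI : Set.Icc p₁ p₂ ⊆ Set.Ioo a b) (hp : p₁ < p₂) (hp₀ : p₀ ∈ Set.Ioo a b \ Set.Icc p₁ p₂)
    (ψ ψt : ℝ → ℝ)
    (hψ1 : ContDiffOn ℝ 1 ψ (Set.Ioo a b))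
    (hψ2 : ContDiffOn ℝ 2 ψ (Set.Ioo a b \ {p₀}))
    (hfact : ∀ p ∈ Set.Ioo a b, deriv ψ p = |p - p₀| ^ (ρ - 1) * ψt p)
    (hψtc : ContinuousOn (fun p => |ψt p|) (Set.Ioo a b))
    (hψt0 : ∀ p ∈ Set.Ioo a b, ψt p ≠ 0)
    (hmono : MonotoneOn (deriv ψ) (Set.Icc p₁ p₂) ∨
      AntitoneOn (deriv ψ) (Set.Icc p₁ p₂))
    (U ut : ℝ → ℂ)
    (hU : ∀ p ∈ Set.Ioc p₁ p₂, U p = ((p - p₁) ^ (μ - 1) : ℝ) * ut p)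
    (hutc : ContinuousOn ut (Set.Icc p₁ p₂))
    (hutd : ∀ p ∈ Set.Ioo p₁ p₂, DifferentiableAt ℝ ut p)
    (hutint : IntervalIntegrable (deriv ut) volume p₁ p₂)
    (hut0 : μ ≠ 1 → ut p₁ ≠ 0) :
    ∀ ω : ℝ, 0 < ω →
      ‖∫ p in p₁..p₂, U p * Complex.exp (Complex.I * ω * ψ p)‖ ≤
        ((2 / μ) * (⨆ p : Set.Icc p₁ p₂, ‖ut p‖) +
          (4 * (⨆ p : Set.Icc p₁ p₂, ‖ut p‖) +
            ∫ p in p₁..p₂, ‖deriv ut p‖) *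
          (⨅ p : Set.Icc p₁ p₂, |ψt p|)⁻¹) * ω ^ (-(μ / ρ)) := by
  obtain ⟨hμ0, hμ1⟩ := hμ
  intro ω hω
  have hp₁Icc : p₁ ∈ Set.Icc p₁ p₂ := ⟨le_refl _, hp.le⟩
  have hbddM : BddAbove (Set.range fun q : Set.Icc p₁ p₂ => ‖ut q‖) := by
    have h := (isCompact_Icc.image_of_continuousOn hutc.norm).bddAbove
    rwa [Set.image_eq_range] at h
  set M := ⨆ p : Set.Icc p₁ p₂, ‖ut p‖ with hM_def
  have hMle : ∀ p ∈ Set.Icc p₁ p₂, ‖ut p‖ ≤ M := fun p hp' => le_ciSup hbddM ⟨p, hp'⟩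
  have hM0 : 0 ≤ M := le_trans (norm_nonneg _) (hMle p₁ hp₁Icc)
  set m := ⨅ p : Set.Icc p₁ p₂, |ψt p| with hm_def
  haveI : Nonempty (Set.Icc p₁ p₂) := ⟨⟨p₁, hp₁Icc⟩⟩
  have hbddm : BddBelow (Set.range fun q : Set.Icc p₁ p₂ => |ψt q|) :=
    ⟨0, by rintro x ⟨q, rfl⟩; exact abs_nonneg _⟩
  have hmle : ∀ p ∈ Set.Icc p₁ p₂, m ≤ |ψt p| := fun p hp' => ciInf_le hbddm ⟨p, hp'⟩
  have hm0 : 0 < m := by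
    obtain ⟨q, hq, hqmin⟩ := isCompact_Icc.exists_isMinOn (Set.nonempty_Icc.2 hp.le)
      ((hψtc.mono hI) : ContinuousOn (fun p => |ψt p|) (Set.Icc p₁ p₂))
    rw [isMinOn_iff] at hqmin
    have h1 : |ψt q| ≤ m := le_ciInf fun i => hqmin i i.2
    have h2 : 0 < |ψt q| := abs_pos.2 (hψt0 q (hI hq))
    linarith
  set V := ∫ p in p₁..p₂, ‖deriv ut p‖ with hV_def
  have hV0 : (0:ℝ) ≤ V := by
    rw [hV_def]; exact integral_nonneg hp.le fun _ _ => norm_nonneg _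
  set δ := ω ^ (-(1/ρ)) with hδ_def
  have hδ0 : 0 < δ := Real.rpow_pos_of_pos hω _
  have hρ0 : (0:ℝ) < ρ := by linarith
  have hδμ : ω ^ (-(μ/ρ)) = δ ^ μ := by
    rw [hδ_def, ← Real.rpow_mul hω.le]
    congr 1
    field_simp
  have hδρ : δ ^ ρ = ω⁻¹ := by
    rw [hδ_def, ← Real.rpow_mul hω.le]
    rw [show -(1/ρ) * ρ = -1 by field_simp]
    exact Real.rpow_neg_one ω
  rw [hδμ]
  have hEc : ContinuousOn (fun p => Complex.exp (Complex.I * ω * ψ p)) (Set.Icc p₁ p₂) :=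
    Complex.continuous_exp.comp_continuousOn
      (continuousOn_const.mul (Complex.continuous_ofReal.comp_continuousOn
        (hψ1.continuousOn.mono hI)))
  have hIntegrable : ∀ x y, p₁ ≤ x → x ≤ y → y ≤ p₂ →
      IntervalIntegrable (fun p => U p * Complex.exp (Complex.I * ω * ψ p)) volume x y := by
    intro x y hx hxy hy
    have hrint : IntervalIntegrable (fun p => (((p - p₁) ^ (μ - 1) : ℝ) : ℂ)) volume x y := by
      have h := rpow_shift_integrable (μ := μ) (p₁ := p₁) hμ0 x y
      rw [intervalIntegrable_iff] at h ⊢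
      exact h.ofReal
    have hFint := hrint.mul_continuousOn (g := fun p => ut p * Complex.exp (Complex.I * ω * ψ p))
      (by rw [Set.uIcc_of_le hxy]
          exact (hutc.mul hEc).mono (Set.Icc_subset_Icc hx hy))
    apply hFint.congr
    rw [Set.uIoc_of_le hxy]
    intro t ht
    simp only
    rw [hU t ⟨lt_of_le_of_lt hx ht.1, le_trans ht.2 hy⟩]
    ring
  have hQ0 : 0 ≤ M * (δ ^ μ / μ) := by positivity
  by_cases hdeg : p₂ - p₁ ≤ 2 * δ
  · have hb := near_bound ψ hμ0 hU hMle (le_refl p₁) hp.le (le_refl p₂) ω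
    refine le_trans hb ?_
    rw [sub_self, Real.zero_rpow hμ0.ne', sub_zero]
    have h1 : (p₂ - p₁) ^ μ ≤ 2 * δ ^ μ := by
      calc (p₂ - p₁) ^ μ ≤ (2 * δ) ^ μ := Real.rpow_le_rpow (by linarith) hdeg hμ0.le
        _ = 2 ^ μ * δ ^ μ := Real.mul_rpow (by norm_num) hδ0.le
        _ ≤ 2 * δ ^ μ := by
            have h2 : (2:ℝ) ^ μ ≤ 2 ^ (1:ℝ) := Real.rpow_le_rpow_of_exponent_le (by norm_num) hμ1
            rw [Real.rpow_one] at h2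
            nlinarith [Real.rpow_nonneg hδ0.le μ]
    have h3 : M * ((p₂ - p₁) ^ μ / μ) ≤ M * ((2 * δ ^ μ) / μ) := by gcongr
    have h2 : 0 ≤ (4 * M + V) * m⁻¹ * δ ^ μ := by positivity
    have h4 : (2 / μ * M + (4 * M + V) * m⁻¹) * δ ^ μ =
        M * ((2 * δ ^ μ) / μ) + (4 * M + V) * m⁻¹ * δ ^ μ := by
      field_simp
    linarith
  · push_neg at hdeg
    have hp₀' : p₀ < p₁ ∨ p₂ < p₀ := by
      have h := hp₀.2
      rw [Set.mem_Icc] at h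
      push_neg at h
      rcases lt_or_ge p₀ p₁ with h1 | h1
      · exact Or.inl h1
      · exact Or.inr (h h1)
    have hRHS : (2 / μ * M + (4 * M + V) * m⁻¹) * δ ^ μ =
        M * (δ ^ μ / μ) + M * (δ ^ μ / μ) + (4 * M + V) * m⁻¹ * δ ^ μ := by
      field_simp
      ring
    have hVmono : ∀ x y, p₁ ≤ x → x ≤ y → y ≤ p₂ →
        ∫ p in x..y, ‖deriv ut p‖ ≤ V := by
      intro x y hx hxy hy
      rw [hV_def]
      exact integral_mono_interval hx hxy hy
        (Filter.Eventually.of_forall fun t => norm_nonneg _) hutint.norm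
    have hutint' : ∀ x y, p₁ ≤ x → x ≤ y → y ≤ p₂ →
        IntervalIntegrable (deriv ut) volume x y := by
      intro x y hx hxy hy
      exact hutint.mono_set
        (by rw [Set.uIcc_of_le hxy, Set.uIcc_of_le hp.le]; exact Set.Icc_subset_Icc hx hy)
    rcases hp₀' with hA | hB
    · -- p₀ to the left of p₁
      have hcp₂ : p₁ + δ < p₂ := by linarith
      have hsplit := integral_add_adjacent_intervals
        (hIntegrable p₁ (p₁ + δ) (le_refl _) (by linarith) (by linarith))
        (hIntegrable (p₁ + δ) p₂ (by linarith) (by linarith) (le_refl _))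
      rw [← hsplit]
      refine le_trans (norm_add_le _ _) ?_
      have hnear := near_bound ψ hμ0 hU hMle (le_refl p₁) (by linarith : p₁ ≤ p₁ + δ)
        hcp₂.le ω
      rw [add_sub_cancel_left, sub_self, Real.zero_rpow hμ0.ne', sub_zero] at hnear
      have hdist : ∀ p ∈ Set.Icc (p₁ + δ) p₂, δ ≤ |p - p₀| := by
        intro q hq
        rw [abs_of_nonneg (by linarith [hq.1] : 0 ≤ q - p₀)]
        linarith [hq.1]
      have hfar := far_bound hρ hμ0 hμ1 hI hψ1 hψ2 hfact hmono hU hutc hutd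
        (hutint' (p₁ + δ) p₂ (by linarith) hcp₂.le (le_refl _))
        hMle hmle hm0
        (hVmono (p₁ + δ) p₂ (by linarith) hcp₂.le (le_refl _))
        hδ0 (le_refl (p₁ + δ)) hcp₂ (le_refl p₂) hdist hω
      rw [far_eq hδρ hδ0 hω hm0.ne'] at hfar
      rw [hRHS]
      linarith
    · -- p₀ to the right of p₂
      have hc₁c₂ : p₁ + δ < p₂ - δ := by linarith
      have hsplit1 := integral_add_adjacent_intervals
        (hIntegrable p₁ (p₁ + δ) (le_refl _) (by linarith) (by linarith))
        (hIntegrable (p₁ + δ) p₂ (by linarith) (by linarith) (le_refl _))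
      have hsplit2 := integral_add_adjacent_intervals
        (hIntegrable (p₁ + δ) (p₂ - δ) (by linarith) hc₁c₂.le (by linarith))
        (hIntegrable (p₂ - δ) p₂ (by linarith) (by linarith) (le_refl _))
      rw [← hsplit1, ← hsplit2]
      refine le_trans (norm_add_le _ _) ?_
      refine le_trans (add_le_add le_rfl (norm_add_le _ _)) ?_
      have hnear1 := near_bound ψ hμ0 hU hMle (le_refl p₁) (by linarith : p₁ ≤ p₁ + δ)
        (by linarith) ω
      rw [add_sub_cancel_left, sub_self, Real.zero_rpow hμ0.ne', sub_zero] at hnear1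
      have hnear2 := near_bound ψ hμ0 hU hMle (by linarith : p₁ ≤ p₂ - δ)
        (by linarith : p₂ - δ ≤ p₂) (le_refl p₂) ω
      have hsub2 : (p₂ - p₁) ^ μ - (p₂ - δ - p₁) ^ μ ≤ δ ^ μ := by
        have h := rpow_sub_le (x := p₂ - δ - p₁) (d := δ) (μ := μ)
          (by linarith) hδ0.le hμ0.le hμ1
        rw [show p₂ - δ - p₁ + δ = p₂ - p₁ by ring] at h
        linarith
      have hnear2' : ‖∫ p in (p₂ - δ)..p₂, U p * Complex.exp (Complex.I * ω * ψ p)‖ ≤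
          M * (δ ^ μ / μ) := by
        refine le_trans hnear2 ?_
        gcongr
      have hdist : ∀ p ∈ Set.Icc (p₁ + δ) (p₂ - δ), δ ≤ |p - p₀| := by
        intro q hq
        rw [abs_sub_comm, abs_of_nonneg (by linarith [hq.2] : 0 ≤ p₀ - q)]
        linarith [hq.2]
      have hfar := far_bound hρ hμ0 hμ1 hI hψ1 hψ2 hfact hmono hU hutc hutd
        (hutint' (p₁ + δ) (p₂ - δ) (by linarith) hc₁c₂.le (by linarith))
        hMle hmle hm0
        (hVmono (p₁ + δ) (p₂ - δ) (by linarith) hc₁c₂.le (by linarith))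
        hδ0 (le_refl (p₁ + δ)) hc₁c₂ (by linarith) hdist hω
      rw [far_eq hδρ hδ0 hω hm0.ne'] at hfar
      rw [hRHS]
      linarith
end
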